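/- arXiv:2602.10673 — 7 statements merged into one kernel-verified Lean document; each statement's English description precedes it below -/
import Mathlib

section
/- Let Y follow the univariate zero-inflated Poisson log-normal distribution ZIPLN(π, μ, σ²), and set E := π·exp(μ + σ²/2). Then the variance of Y satisfies Var(Y) = ∑_{y=0}^∞ y²·p(y) − E² = E + E²·(e^{σ²} − π)/π. -/
open MeasureTheory ProbabilityTheory Real

/-- The probability mass function of the univariate zero-inflated Poisson log-normal
distribution ZIPLN(π, μ, σ²):
`p(y) = (1−π)·1{y=0} + π·∫ exp(−e^{μ+z})·e^{(μ+z)y}/y! dγ(z)`,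
where `γ` is the centered Gaussian measure on ℝ with variance `σ²`.
Here `pr` plays the role of the zero-inflation probability π. -/
noncomputable def ziplnPMF (pr μ σ : ℝ) (y : ℕ) : ℝ :=
  (1 - pr) * (if y = 0 then 1 else 0) +
    pr * ∫ z, exp (-exp (μ + z)) * exp ((μ + z) * y) / (Nat.factorial y)
        ∂(gaussianReal 0 ⟨σ ^ 2, sq_nonneg σ⟩)

lemma exp_gauss_eq (σ t : ℝ) (hσ : 0 < σ) (z : ℝ) :
    exp (t * z) * gaussianPDFReal 0 ⟨σ ^ 2, sq_nonneg σ⟩ z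
      = (Real.sqrt (2 * π * σ ^ 2))⁻¹ * exp (σ ^ 2 * t ^ 2 / 2) *
        exp (-(2 * σ ^ 2)⁻¹ * (z + -(σ ^ 2 * t)) ^ 2) := by
  have hσ2 : (0:ℝ) ≠ σ ^ 2 := by positivity
  simp only [gaussianPDFReal, NNReal.coe_mk (σ ^ 2) (sq_nonneg σ), sub_zero]
  rw [mul_comm (exp (t*z)), mul_assoc, ← Real.exp_add]
  conv_rhs => rw [mul_assoc, ← Real.exp_add]
  congr 2
  change -z ^ 2 / (2 * σ ^ 2) + t * z = _
  field_simp
  ring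

lemma integrable_exp_mul_gaussPDF (σ t : ℝ) (hσ : 0 < σ) :
    Integrable (fun z : ℝ => exp (t * z) * gaussianPDFReal 0 ⟨σ ^ 2, sq_nonneg σ⟩ z) := by
  have ha : (0:ℝ) < (2 * σ ^ 2)⁻¹ := by positivity
  simp_rw [exp_gauss_eq σ t hσ]
  exact ((integrable_exp_neg_mul_sq ha).comp_add_right _).const_mul _

lemma integral_exp_mul_gaussPDF (σ t : ℝ) (hσ : 0 < σ) :
    ∫ z : ℝ, exp (t * z) * gaussianPDFReal 0 ⟨σ ^ 2, sq_nonneg σ⟩ z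
      = exp (σ ^ 2 * t ^ 2 / 2) := by
  have ha : (0:ℝ) < (2 * σ ^ 2)⁻¹ := by positivity
  simp_rw [exp_gauss_eq σ t hσ]
  rw [integral_const_mul, integral_add_right_eq_self
    (fun z : ℝ => exp (-(2 * σ ^ 2)⁻¹ * z ^ 2)), integral_gaussian]
  have : √(π / (2 * σ ^ 2)⁻¹) = √(2 * π * σ ^ 2) := by
    congr 1
    field_simp
  rw [this, mul_comm, ← mul_assoc, mul_inv_cancel₀, one_mul]
  positivity

lemma integral_gaussReal (σ : ℝ) (hσ : 0 < σ) (f : ℝ → ℝ) :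
    ∫ z, f z ∂(gaussianReal 0 ⟨σ ^ 2, sq_nonneg σ⟩)
      = ∫ z, f z * gaussianPDFReal 0 ⟨σ ^ 2, sq_nonneg σ⟩ z := by
  have hv : (⟨σ ^ 2, sq_nonneg σ⟩ : NNReal) ≠ 0 := by
    simp only [ne_eq, ← NNReal.coe_eq_zero, NNReal.coe_mk]
    exact ne_of_gt (pow_pos hσ 2)
  rw [gaussianReal_of_var_ne_zero _ hv, gaussianPDF_def 0 ⟨σ ^ 2, sq_nonneg σ⟩]
  have : (fun x => ENNReal.ofReal (gaussianPDFReal 0 ⟨σ ^ 2, sq_nonneg σ⟩ x))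
      = fun x => ((gaussianPDFReal 0 ⟨σ ^ 2, sq_nonneg σ⟩ x).toNNReal : ENNReal) := by
    ext x; rfl
  rw [this, integral_withDensity_eq_integral_smul
    ((measurable_gaussianPDFReal 0 ⟨σ ^ 2, sq_nonneg σ⟩).real_toNNReal) f]
  congr 1
  ext x
  rw [NNReal.smul_def, smul_eq_mul, Real.coe_toNNReal _ (gaussianPDFReal_nonneg 0 ⟨σ ^ 2, sq_nonneg σ⟩ _)]
  ring

lemma integrable_gaussReal_iff (σ : ℝ) (hσ : 0 < σ) (f : ℝ → ℝ) :
    Integrable f (gaussianReal 0 ⟨σ ^ 2, sq_nonneg σ⟩)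
      ↔ Integrable (fun z => f z * gaussianPDFReal 0 ⟨σ ^ 2, sq_nonneg σ⟩ z) := by
  have hv : (⟨σ ^ 2, sq_nonneg σ⟩ : NNReal) ≠ 0 := by
    simp only [ne_eq, ← NNReal.coe_eq_zero, NNReal.coe_mk]
    exact ne_of_gt (pow_pos hσ 2)
  rw [gaussianReal_of_var_ne_zero _ hv, gaussianPDF_def 0 ⟨σ ^ 2, sq_nonneg σ⟩]
  rw [integrable_withDensity_iff (measurable_gaussianPDFReal 0 ⟨σ ^ 2, sq_nonneg σ⟩).ennreal_ofReal
    (Filter.Eventually.of_forall fun x => ENNReal.ofReal_lt_top)]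
  simp_rw [ENNReal.toReal_ofReal (gaussianPDFReal_nonneg 0 ⟨σ ^ 2, sq_nonneg σ⟩ _)]

lemma integrable_exp_gaussReal (σ t : ℝ) (hσ : 0 < σ) :
    Integrable (fun z => exp (t * z)) (gaussianReal 0 ⟨σ ^ 2, sq_nonneg σ⟩) := by
  rw [integrable_gaussReal_iff σ hσ]
  exact integrable_exp_mul_gaussPDF σ t hσ

lemma integral_exp_gaussReal (σ t : ℝ) (hσ : 0 < σ) :
    ∫ z, exp (t * z) ∂(gaussianReal 0 ⟨σ ^ 2, sq_nonneg σ⟩) = exp (σ ^ 2 * t ^ 2 / 2) := by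
  rw [integral_gaussReal σ hσ]
  exact integral_exp_mul_gaussPDF σ t hσ

lemma exp_tsum' (x : ℝ) : ∑' n : ℕ, x ^ n / n.factorial = exp x := by
  rw [exp_eq_exp_ℝ, NormedSpace.exp_eq_tsum_div]

lemma summable_mul_pow_div_factorial (x : ℝ) :
    Summable (fun y : ℕ => (y : ℝ) * x ^ y / y.factorial) := by
  rw [← summable_nat_add_iff 1]
  apply Summable.congr ((Real.summable_pow_div_factorial x).mul_left x)
  intro n
  simp only [Nat.factorial_succ, Nat.cast_mul]
  field_simp [Nat.factorial_succ]
  ring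

lemma summable_mul_sub_one_mul_pow_div_factorial (x : ℝ) :
    Summable (fun y : ℕ => (y : ℝ) * ((y : ℝ) - 1) * x ^ y / y.factorial) := by
  rw [← summable_nat_add_iff 2]
  apply Summable.congr ((Real.summable_pow_div_factorial x).mul_left (x ^ 2))
  intro n
  simp only [Nat.factorial_succ, Nat.cast_mul]
  field_simp [Nat.factorial_succ]
  push_cast
  ring

lemma tsum_mul_pow_div_factorial (x : ℝ) :
    ∑' y : ℕ, (y : ℝ) * x ^ y / y.factorial = x * exp x := by
  rw [Summable.tsum_eq_zero_add (summable_mul_pow_div_factorial x)]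
  simp only [Nat.cast_zero, zero_mul, zero_div, zero_add]
  rw [← exp_tsum' x, ← tsum_mul_left]
  apply tsum_congr
  intro n
  simp only [Nat.factorial_succ, Nat.cast_mul]
  field_simp [Nat.factorial_succ]
  push_cast
  ring

lemma tsum_mul_sub_one_mul_pow_div_factorial (x : ℝ) :
    ∑' y : ℕ, (y : ℝ) * ((y : ℝ) - 1) * x ^ y / y.factorial = x ^ 2 * exp x := by
  have hs := summable_mul_sub_one_mul_pow_div_factorial x
  rw [Summable.tsum_eq_zero_add hs]
  simp only [Nat.cast_zero, zero_mul, zero_div, zero_add]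
  rw [Summable.tsum_eq_zero_add ((summable_nat_add_iff 1).mpr hs)]
  norm_num
  rw [← exp_tsum' x, ← tsum_mul_left]
  apply tsum_congr
  intro n
  simp only [Nat.factorial_succ, Nat.cast_mul]
  field_simp [Nat.factorial_succ]
  push_cast
  ring

lemma summable_sq_mul_pow_div_factorial (x : ℝ) :
    Summable (fun y : ℕ => (y : ℝ) ^ 2 * x ^ y / y.factorial) := by
  apply Summable.congr ((summable_mul_sub_one_mul_pow_div_factorial x).add
    (summable_mul_pow_div_factorial x))
  intro n
  field_simp
  ring

lemma tsum_sq_mul_pow_div_factorial (x : ℝ) :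
    ∑' y : ℕ, (y : ℝ) ^ 2 * x ^ y / y.factorial = (x + x ^ 2) * exp x := by
  have h : (fun y : ℕ => (y : ℝ) ^ 2 * x ^ y / y.factorial)
      = fun y : ℕ => (y : ℝ) * ((y : ℝ) - 1) * x ^ y / y.factorial
        + (y : ℝ) * x ^ y / y.factorial := by
    ext y; field_simp; ring
  rw [h, Summable.tsum_add (summable_mul_sub_one_mul_pow_div_factorial x)
    (summable_mul_pow_div_factorial x), tsum_mul_sub_one_mul_pow_div_factorial,
    tsum_mul_pow_div_factorial]
  ring

lemma poisson_sq_summable (x : ℝ) :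
    Summable (fun y : ℕ => (y : ℝ) ^ 2 * (exp (-x) * x ^ y / y.factorial)) := by
  apply Summable.congr ((summable_sq_mul_pow_div_factorial x).mul_left (exp (-x)))
  intro n
  ring

lemma poisson_sq_tsum (x : ℝ) :
    ∑' y : ℕ, (y : ℝ) ^ 2 * (exp (-x) * x ^ y / y.factorial) = x + x ^ 2 := by
  have h : (fun y : ℕ => (y : ℝ) ^ 2 * (exp (-x) * x ^ y / y.factorial))
      = fun y : ℕ => exp (-x) * ((y : ℝ) ^ 2 * x ^ y / y.factorial) := by
    ext y; ring
  rw [h, tsum_mul_left, tsum_sq_mul_pow_div_factorial, Real.exp_neg]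
  field_simp

noncomputable def gg (μ : ℝ) (y : ℕ) (z : ℝ) : ℝ :=
  (y : ℝ) ^ 2 * (exp (-exp (μ + z)) * exp ((μ + z) * y) / (Nat.factorial y))

lemma gg_eq (μ : ℝ) (y : ℕ) (z : ℝ) :
    gg μ y z = (y : ℝ) ^ 2 * (exp (-exp (μ + z)) * exp (μ + z) ^ y / (Nat.factorial y)) := by
  rw [gg, mul_comm (μ + z) (y : ℝ), exp_nat_mul]

lemma gg_nonneg (μ : ℝ) (y : ℕ) (z : ℝ) : 0 ≤ gg μ y z := by
  rw [gg]; positivity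

lemma gg_tsum (μ : ℝ) (z : ℝ) :
    ∑' y : ℕ, gg μ y z = exp (μ + z) + exp (μ + z) ^ 2 := by
  simp_rw [gg_eq]
  exact poisson_sq_tsum (exp (μ + z))

lemma gg_summable (μ : ℝ) (z : ℝ) : Summable (fun y : ℕ => gg μ y z) := by
  simp_rw [gg_eq]
  exact poisson_sq_summable (exp (μ + z))

/-- The variance of a ZIPLN(π, μ, σ²) random variable, with E := π·exp(μ + σ²/2),
is `Var(Y) = ∑ y²·p(y) − E² = E + E²·(e^{σ²} − π)/π`. -/
theorem zipln_variance (pr μ σ : ℝ) (hpr : pr ∈ Set.Ioc (0 : ℝ) 1) (hσ : 0 < σ)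
    (E : ℝ) (hE : E = pr * exp (μ + σ ^ 2 / 2)) :
    (∑' y : ℕ, (y : ℝ) ^ 2 * ziplnPMF pr μ σ y) - E ^ 2
      = E + E ^ 2 * (exp (σ ^ 2) - pr) / pr := by
  set ν := gaussianReal 0 (⟨σ ^ 2, sq_nonneg σ⟩ : NNReal) with hν
  have hcont : ∀ y : ℕ, Continuous (gg μ y) := by
    intro y
    unfold gg
    fun_prop
  -- integrability of the limit function
  have e1 : (fun z : ℝ => exp (μ + z)) = fun z => exp μ * exp (1 * z) := by
    ext z; rw [← Real.exp_add]; ring_nf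
  have e2 : (fun z : ℝ => exp (μ + z) ^ 2) = fun z => exp (2 * μ) * exp (2 * z) := by
    ext z; rw [sq, ← Real.exp_add, ← Real.exp_add]; congr 1; ring
  have i1 : Integrable (fun z : ℝ => exp (μ + z)) ν := by
    rw [e1]; exact (integrable_exp_gaussReal σ 1 hσ).const_mul _
  have i2 : Integrable (fun z : ℝ => exp (μ + z) ^ 2) ν := by
    rw [e2]; exact (integrable_exp_gaussReal σ 2 hσ).const_mul _
  have j1 : ∫ z, exp (μ + z) ∂ν = exp (μ + σ ^ 2 / 2) := by
    rw [e1, integral_const_mul, integral_exp_gaussReal σ 1 hσ, ← Real.exp_add]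
    norm_num
  have j2 : ∫ z, exp (μ + z) ^ 2 ∂ν = exp (μ + σ ^ 2 / 2) ^ 2 * exp (σ ^ 2) := by
    rw [e2, integral_const_mul, integral_exp_gaussReal σ 2 hσ, ← Real.exp_add,
      sq (exp (μ + σ ^ 2 / 2)), ← Real.exp_add, ← Real.exp_add]
    ring_nf
  have ilim : Integrable (fun z : ℝ => exp (μ + z) + exp (μ + z) ^ 2) ν := i1.add i2
  -- the swap of tsum and integral
  have hswap : ∑' y : ℕ, ∫ z, gg μ y z ∂ν = ∫ z, ∑' y : ℕ, gg μ y z ∂ν := by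
    refine (MeasureTheory.integral_tsum (fun y => (hcont y).aestronglyMeasurable) ?_).symm
    rw [← MeasureTheory.lintegral_tsum (fun y =>
      ((hcont y).measurable.enorm).aemeasurable)]
    have hz : ∀ z : ℝ, ∑' y : ℕ, (‖gg μ y z‖₊ : ENNReal)
        = ENNReal.ofReal (exp (μ + z) + exp (μ + z) ^ 2) := by
      intro z
      rw [← gg_tsum μ z, ENNReal.ofReal_tsum_of_nonneg (fun y => gg_nonneg μ y z)
        (gg_summable μ z)]
      refine tsum_congr fun y => ?_
      rw [← enorm_eq_nnnorm, ← ofReal_norm, Real.norm_of_nonneg (gg_nonneg μ y z)]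
    simp_rw [enorm_eq_nnnorm, hz]
    exact ilim.lintegral_lt_top.ne
  -- rewrite the summands
  have h1 : ∀ y : ℕ, (y : ℝ) ^ 2 * ziplnPMF pr μ σ y = pr * ∫ z, gg μ y z ∂ν := by
    intro y
    rw [ziplnPMF]
    cases y with
    | zero => simp [gg]
    | succ n =>
      simp only [Nat.succ_ne_zero, if_false, mul_zero, zero_add, gg]
      rw [MeasureTheory.integral_const_mul]
      ring
  calc (∑' y : ℕ, (y : ℝ) ^ 2 * ziplnPMF pr μ σ y) - E ^ 2
      = (∑' y : ℕ, pr * ∫ z, gg μ y z ∂ν) - E ^ 2 := by rw [tsum_congr h1]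
    _ = pr * (∫ z, ∑' y : ℕ, gg μ y z ∂ν) - E ^ 2 := by rw [tsum_mul_left, hswap]
    _ = pr * (exp (μ + σ ^ 2 / 2) + exp (μ + σ ^ 2 / 2) ^ 2 * exp (σ ^ 2)) - E ^ 2 := by
        rw [show (fun z : ℝ => ∑' y : ℕ, gg μ y z)
            = fun z : ℝ => exp (μ + z) + exp (μ + z) ^ 2 from funext (gg_tsum μ),
          MeasureTheory.integral_add i1 i2, j1, j2]
    _ = E + E ^ 2 * (exp (σ ^ 2) - pr) / pr := by
        have h0 : pr ≠ 0 := ne_of_gt hpr.1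
        rw [hE]
        field_simp
        ring
end

section
/- Let (Y₁, Y₂) follow the bivariate zero-inflated Poisson log-normal model with parameters (π₁, π₂, μ₁, μ₂, c₁, c₂). Then the covariance of Y₁ and Y₂ satisfies Cov(Y₁, Y₂) = ∑_{y₁,y₂} y₁·y₂·p(y₁,y₂) − E₁·E₂ = E₁·E₂·(e^{σ₁₂} − 1), where σ₁₂ = c₁·c₂ and E_j = π_j·exp(μ_j + ‖c_j‖²/2). -/
open MeasureTheory ProbabilityTheory Real

namespace BiziplnAux
set_option maxHeartbeats 1000000


lemma gauss_key (t x : ℝ) :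
    gaussianPDFReal 0 1 x * rexp (t * x)
      = (Real.sqrt (2 * π))⁻¹ * rexp (t ^ 2 / 2) * rexp (-(1 / 2) * (x - t) ^ 2) := by
  simp only [gaussianPDFReal, NNReal.coe_one, mul_one, sub_zero]
  rw [mul_assoc, ← Real.exp_add, mul_assoc, ← Real.exp_add]
  congr 1
  ring

lemma integrable_pdf_mul_exp (t : ℝ) :
    Integrable (fun x : ℝ => gaussianPDFReal 0 1 x * rexp (t * x)) := by
  simp only [gauss_key]
  exact (((integrable_exp_neg_mul_sq (by norm_num : (0:ℝ) < 1/2)).comp_sub_right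
    t).const_mul _)

lemma integral_pdf_mul_exp (t : ℝ) :
    ∫ x : ℝ, gaussianPDFReal 0 1 x * rexp (t * x) = rexp (t ^ 2 / 2) := by
  simp only [gauss_key]
  rw [integral_const_mul, integral_sub_right_eq_self (fun x => rexp (-(1/2) * x ^ 2)) t,
    integral_gaussian]
  have h2π : Real.sqrt (π / (1/2)) = Real.sqrt (2 * π) := by norm_num [mul_comm]
  rw [h2π, mul_right_comm, inv_mul_cancel₀ (by positivity), one_mul]

lemma gaussianReal_eq : gaussianReal 0 1
    = MeasureTheory.volume.withDensity
      (fun x => ((gaussianPDFReal 0 1 x).toNNReal : ENNReal)) := by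
  rw [gaussianReal_of_var_ne_zero 0 one_ne_zero]
  rfl

lemma integrable_exp_mul_gauss (t : ℝ) :
    Integrable (fun x : ℝ => rexp (t * x)) (gaussianReal 0 1) := by
  rw [gaussianReal_eq,
    integrable_withDensity_iff_integrable_smul
      ((measurable_gaussianPDFReal 0 1).real_toNNReal)]
  have := integrable_pdf_mul_exp t
  refine this.congr ?_
  filter_upwards with x
  simp [NNReal.smul_def, Real.coe_toNNReal _ (gaussianPDFReal_nonneg 0 1 x)]

lemma integral_exp_mul_gauss (t : ℝ) :
    ∫ x : ℝ, rexp (t * x) ∂(gaussianReal 0 1) = rexp (t ^ 2 / 2) := by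
  rw [gaussianReal_eq,
    integral_withDensity_eq_integral_smul ((measurable_gaussianPDFReal 0 1).real_toNNReal)]
  rw [← integral_pdf_mul_exp t]
  congr 1
  funext x
  simp [NNReal.smul_def, Real.coe_toNNReal _ (gaussianPDFReal_nonneg 0 1 x)]



theorem integral_pi_prod {n : ℕ} (μ : Measure ℝ) [SigmaFinite μ] (f : Fin n → ℝ → ℝ) :
    ∫ x : Fin n → ℝ, ∏ i, f i (x i) ∂(Measure.pi fun _ => μ) = ∏ i, ∫ x, f i x ∂μ := by
  induction n with
  | zero => simp [Measure.real, Measure.pi_univ]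
  | succ n ih =>
      calc
        _ = ∫ x : ℝ × (Fin n → ℝ), f 0 x.1 * ∏ i : Fin n, f i.succ (x.2 i)
            ∂(μ.prod (Measure.pi fun _ => μ)) := by
          rw [← ((measurePreserving_piFinSuccAbove (fun _ : Fin (n+1) => μ) 0).symm).integral_comp']
          congr 1
          funext x
          rw [Fin.prod_univ_succ]
          simp [MeasurableEquiv.piFinSuccAbove_symm_apply, Fin.insertNthEquiv,
            Fin.insertNth_zero, Fin.zero_succAbove]
        _ = (∫ x, f 0 x ∂μ) * ∏ i : Fin n, ∫ x, f i.succ x ∂μ := by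
          exact (integral_prod_mul (f 0) (fun y : Fin n → ℝ => ∏ i : Fin n, f i.succ (y i))).trans (by rw [ih])
        _ = ∏ i, ∫ x, f i x ∂μ := by rw [Fin.prod_univ_succ]

theorem integrable_pi_prod {n : ℕ} (μ : Measure ℝ) [SigmaFinite μ] {f : Fin n → ℝ → ℝ}
    (hf : ∀ i, Integrable (f i) μ) :
    Integrable (fun x : Fin n → ℝ => ∏ i, f i (x i)) (Measure.pi fun _ => μ) := by
  induction n with
  | zero => simp [integrable_const_iff]; exact ⟨by simp [Measure.pi_univ]⟩
  | succ n ih =>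
      have h := (measurePreserving_piFinSuccAbove (fun _ : Fin (n+1) => μ) 0).symm
      rw [← h.integrable_comp_emb (MeasurableEquiv.measurableEmbedding _)]
      have : Integrable (fun x : ℝ × (Fin n → ℝ) => f 0 x.1 * ∏ i : Fin n, f i.succ (x.2 i))
          (μ.prod (Measure.pi fun _ => μ)) :=
        (hf 0).mul_prod (ih fun i => hf i.succ)
      refine this.congr ?_
      filter_upwards with x
      rw [Function.comp_apply, Fin.prod_univ_succ]
      simp [MeasurableEquiv.piFinSuccAbove_symm_apply, Fin.insertNthEquiv,
        Fin.insertNth_zero, Fin.zero_succAbove]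



lemma exp_tsum (x : ℝ) : ∑' n : ℕ, x ^ n / (Nat.factorial n) = rexp x := by
  rw [Real.exp_eq_exp_ℝ, NormedSpace.exp_eq_tsum_div]

lemma shift (x : ℝ) (n : ℕ) :
    ((n + 1 : ℕ) : ℝ) * x ^ (n + 1) / (Nat.factorial (n+1)) = x * (x ^ n / (Nat.factorial n)) := by
  have h : ((Nat.factorial n) : ℝ) ≠ 0 := Nat.cast_ne_zero.mpr (Nat.factorial_ne_zero n)
  rw [Nat.factorial_succ, pow_succ]
  push_cast
  field_simp

lemma summable_mean (x : ℝ) : Summable (fun n : ℕ => (n : ℝ) * x ^ n / (Nat.factorial n)) := by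
  rw [← summable_nat_add_iff 1]
  exact ((Real.summable_pow_div_factorial x).mul_left x).congr fun n => (shift x n).symm

lemma tsum_mean (x : ℝ) : ∑' n : ℕ, (n : ℝ) * x ^ n / (Nat.factorial n) = x * rexp x := by
  rw [Summable.tsum_eq_zero_add (summable_mean x)]
  simp only [Nat.cast_zero, zero_mul, zero_div, zero_add]
  rw [tsum_congr (fun n => shift x n), tsum_mul_left, exp_tsum]

lemma pois_eq (pr t : ℝ) (y : ℕ) :
    (y : ℝ) * (pr * (rexp (-rexp t) * rexp (t * y) / (Nat.factorial y)))
      = (pr * rexp (-rexp t)) * ((y : ℝ) * (rexp t) ^ y / (Nat.factorial y)) := by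
  rw [mul_comm t (y : ℝ), Real.exp_nat_mul]
  ring

lemma summable_pois (pr t : ℝ) :
    Summable (fun y : ℕ => (y : ℝ) * (pr * (rexp (-rexp t) * rexp (t * y) / (Nat.factorial y)))) :=
  ((summable_mean (rexp t)).mul_left (pr * rexp (-rexp t))).congr
    fun y => (pois_eq pr t y).symm

lemma tsum_pois (pr t : ℝ) :
    ∑' y : ℕ, (y : ℝ) * (pr * (rexp (-rexp t) * rexp (t * y) / (Nat.factorial y))) = pr * rexp t := by
  rw [tsum_congr (pois_eq pr t), tsum_mul_left, tsum_mean, Real.exp_neg]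
  have := Real.exp_ne_zero (rexp t)
  field_simp

lemma pois_nonneg (pr t : ℝ) (hpr : 0 ≤ pr) (y : ℕ) :
    0 ≤ (y : ℝ) * (pr * (rexp (-rexp t) * rexp (t * y) / (Nat.factorial y))) := by
  positivity



noncomputable def hfun {q : ℕ} (c₁ c₂ : Fin q → ℝ) (pr₁ pr₂ μ₁ μ₂ : ℝ)
    (y : ℕ × ℕ) (w : Fin q → ℝ) : ℝ :=
  ((y.1 : ℝ) * (pr₁ * (rexp (-rexp (μ₁ + ∑ i, c₁ i * w i))
      * rexp ((μ₁ + ∑ i, c₁ i * w i) * y.1) / (Nat.factorial y.1)))) *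
  ((y.2 : ℝ) * (pr₂ * (rexp (-rexp (μ₂ + ∑ i, c₂ i * w i))
      * rexp ((μ₂ + ∑ i, c₂ i * w i) * y.2) / (Nat.factorial y.2))))

variable {q : ℕ} (c₁ c₂ : Fin q → ℝ) (pr₁ pr₂ μ₁ μ₂ : ℝ)

lemma cont_lin (c : Fin q → ℝ) (μ : ℝ) :
    Continuous fun w : Fin q → ℝ => μ + ∑ i, c i * w i :=
  continuous_const.add (continuous_finset_sum _ fun i _ =>
    continuous_const.mul (continuous_apply i))

lemma hfun_cont (y : ℕ × ℕ) : Continuous (hfun c₁ c₂ pr₁ pr₂ μ₁ μ₂ y) := by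
  have h₁ := cont_lin c₁ μ₁
  have h₂ := cont_lin c₂ μ₂
  have k₁ : Continuous fun w : Fin q → ℝ =>
      rexp (-rexp (μ₁ + ∑ i, c₁ i * w i))
        * rexp ((μ₁ + ∑ i, c₁ i * w i) * y.1) / (Nat.factorial y.1 : ℝ) :=
    ((Real.continuous_exp.comp ((Real.continuous_exp.comp h₁).neg)).mul
        (Real.continuous_exp.comp (h₁.mul continuous_const))).div_const _
  have k₂ : Continuous fun w : Fin q → ℝ =>
      rexp (-rexp (μ₂ + ∑ i, c₂ i * w i))
        * rexp ((μ₂ + ∑ i, c₂ i * w i) * y.2) / (Nat.factorial y.2 : ℝ) :=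
    ((Real.continuous_exp.comp ((Real.continuous_exp.comp h₂).neg)).mul
        (Real.continuous_exp.comp (h₂.mul continuous_const))).div_const _
  exact (continuous_const.mul (continuous_const.mul k₁)).mul
    (continuous_const.mul (continuous_const.mul k₂))

lemma hfun_summable (hp₁ : 0 ≤ pr₁) (hp₂ : 0 ≤ pr₂) (w : Fin q → ℝ) :
    Summable (fun y : ℕ × ℕ => hfun c₁ c₂ pr₁ pr₂ μ₁ μ₂ y w) :=
  Summable.mul_of_nonneg (summable_pois pr₁ _) (summable_pois pr₂ _)
    (fun y => pois_nonneg pr₁ _ hp₁ y) (fun y => pois_nonneg pr₂ _ hp₂ y)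

lemma hfun_nonneg (hp₁ : 0 ≤ pr₁) (hp₂ : 0 ≤ pr₂) (y : ℕ × ℕ) (w : Fin q → ℝ) :
    0 ≤ hfun c₁ c₂ pr₁ pr₂ μ₁ μ₂ y w :=
  mul_nonneg (pois_nonneg pr₁ _ hp₁ y.1) (pois_nonneg pr₂ _ hp₂ y.2)

lemma hfun_tsum (hp₁ : 0 ≤ pr₁) (hp₂ : 0 ≤ pr₂) (w : Fin q → ℝ) :
    ∑' y : ℕ × ℕ, hfun c₁ c₂ pr₁ pr₂ μ₁ μ₂ y w
      = (pr₁ * pr₂ * rexp (μ₁ + μ₂))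
          * rexp (∑ i, (c₁ i + c₂ i) * w i) := by
  have hAn : Summable (fun y : ℕ => ‖(y : ℝ) * (pr₁ * (rexp (-rexp (μ₁ + ∑ i, c₁ i * w i))
      * rexp ((μ₁ + ∑ i, c₁ i * w i) * y) / (Nat.factorial y)))‖) :=
    (summable_pois pr₁ _).congr fun y => (Real.norm_of_nonneg (pois_nonneg pr₁ _ hp₁ y)).symm
  have hBn : Summable (fun y : ℕ => ‖(y : ℝ) * (pr₂ * (rexp (-rexp (μ₂ + ∑ i, c₂ i * w i))
      * rexp ((μ₂ + ∑ i, c₂ i * w i) * y) / (Nat.factorial y)))‖) :=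
    (summable_pois pr₂ _).congr fun y => (Real.norm_of_nonneg (pois_nonneg pr₂ _ hp₂ y)).symm
  rw [show (fun y : ℕ × ℕ => hfun c₁ c₂ pr₁ pr₂ μ₁ μ₂ y w) = fun y : ℕ × ℕ =>
      ((y.1 : ℝ) * (pr₁ * (rexp (-rexp (μ₁ + ∑ i, c₁ i * w i))
        * rexp ((μ₁ + ∑ i, c₁ i * w i) * y.1) / (Nat.factorial y.1)))) *
      ((y.2 : ℝ) * (pr₂ * (rexp (-rexp (μ₂ + ∑ i, c₂ i * w i))
        * rexp ((μ₂ + ∑ i, c₂ i * w i) * y.2) / (Nat.factorial y.2)))) from rfl,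
    ← tsum_mul_tsum_of_summable_norm hAn hBn, tsum_pois, tsum_pois]
  have hsum : ∑ i, (c₁ i + c₂ i) * w i = (∑ i, c₁ i * w i) + ∑ i, c₂ i * w i := by
    rw [← Finset.sum_add_distrib]
    exact Finset.sum_congr rfl fun i _ => add_mul _ _ _
  rw [hsum]
  simp only [Real.exp_add]
  ring

lemma integrable_exp_sum_mul (a : Fin q → ℝ) :
    Integrable (fun w : Fin q → ℝ => rexp (∑ i, a i * w i))
      (Measure.pi fun _ => gaussianReal 0 1) := by
  rw [show (fun w : Fin q → ℝ => rexp (∑ i, a i * w i))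
      = fun w => ∏ i, rexp (a i * w i) from funext fun w => Real.exp_sum _ _]
  exact integrable_pi_prod _ fun i => integrable_exp_mul_gauss (a i)

lemma integral_exp_sum_mul (a : Fin q → ℝ) :
    ∫ w : Fin q → ℝ, rexp (∑ i, a i * w i) ∂(Measure.pi fun _ => gaussianReal 0 1)
      = rexp ((∑ i, a i ^ 2) / 2) := by
  rw [show (fun w : Fin q → ℝ => rexp (∑ i, a i * w i))
      = fun w => ∏ i, rexp (a i * w i) from funext fun w => Real.exp_sum _ _,
    integral_pi_prod (gaussianReal 0 1) (fun i x => rexp (a i * x))]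
  calc ∏ i, ∫ x : ℝ, rexp (a i * x) ∂(gaussianReal 0 1)
      = ∏ i, rexp (a i ^ 2 / 2) := Finset.prod_congr rfl fun i _ => integral_exp_mul_gauss (a i)
    _ = rexp (∑ i, a i ^ 2 / 2) := (Real.exp_sum _ _).symm
    _ = rexp ((∑ i, a i ^ 2) / 2) := by rw [Finset.sum_div]

end BiziplnAux



/-- The joint probability mass function of the bivariate zero-inflated Poisson
log-normal model with parameters (π₁, π₂, μ₁, μ₂, c₁, c₂):
`p(y₁, y₂) = ∫_{ℝ^q} ∏_{j=1,2} [(1−π_j)·1{y_j=0} +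
  π_j·exp(−e^{μ_j + c_j·w})·e^{(μ_j + c_j·w)·y_j}/y_j!] dΓ(w)`,
where `Γ` is the q-fold product of standard Gaussian measures on ℝ.
Here `pr₁`, `pr₂` play the role of the probabilities π₁, π₂. -/
noncomputable def biziplnPMF {q : ℕ} (c₁ c₂ : Fin q → ℝ) (pr₁ pr₂ μ₁ μ₂ : ℝ)
    (y₁ y₂ : ℕ) : ℝ :=
  ∫ w : Fin q → ℝ,
    ((1 - pr₁) * (if y₁ = 0 then 1 else 0) +
      pr₁ * (exp (-exp (μ₁ + ∑ i, c₁ i * w i)) * exp ((μ₁ + ∑ i, c₁ i * w i) * y₁)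
        / (Nat.factorial y₁))) *
    ((1 - pr₂) * (if y₂ = 0 then 1 else 0) +
      pr₂ * (exp (-exp (μ₂ + ∑ i, c₂ i * w i)) * exp ((μ₂ + ∑ i, c₂ i * w i) * y₂)
        / (Nat.factorial y₂)))
    ∂(Measure.pi fun _ : Fin q => gaussianReal 0 1)
/-- In the bivariate zero-inflated Poisson log-normal model, the covariance satisfies
`Cov(Y₁, Y₂) = ∑ y₁·y₂·p(y₁,y₂) − E₁·E₂ = E₁·E₂·(e^{σ₁₂} − 1)`, where
`σ₁₂ = c₁·c₂` and `E_j = π_j·exp(μ_j + ‖c_j‖²/2)`. -/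
theorem bizipln_covariance {q : ℕ} (hq : 1 ≤ q) (c₁ c₂ : Fin q → ℝ)
    (pr₁ pr₂ μ₁ μ₂ : ℝ)
    (hpr₁ : pr₁ ∈ Set.Ioc (0 : ℝ) 1) (hpr₂ : pr₂ ∈ Set.Ioc (0 : ℝ) 1)
    (σ₁₂ E₁ E₂ : ℝ)
    (hσ₁₂ : σ₁₂ = ∑ i, c₁ i * c₂ i)
    (hE₁ : E₁ = pr₁ * exp (μ₁ + (∑ i, c₁ i ^ 2) / 2))
    (hE₂ : E₂ = pr₂ * exp (μ₂ + (∑ i, c₂ i ^ 2) / 2)) :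
    (∑' y : ℕ × ℕ, (y.1 : ℝ) * (y.2 : ℝ) * biziplnPMF c₁ c₂ pr₁ pr₂ μ₁ μ₂ y.1 y.2)
        - E₁ * E₂
      = E₁ * E₂ * (exp σ₁₂ - 1) := by
  obtain ⟨hp₁, -⟩ := hpr₁
  obtain ⟨hp₂, -⟩ := hpr₂
  have hstepA : ∀ y : ℕ × ℕ,
      (y.1 : ℝ) * (y.2 : ℝ) * biziplnPMF c₁ c₂ pr₁ pr₂ μ₁ μ₂ y.1 y.2
        = ∫ w : Fin q → ℝ, BiziplnAux.hfun c₁ c₂ pr₁ pr₂ μ₁ μ₂ y w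
            ∂(Measure.pi fun _ : Fin q => gaussianReal 0 1) := by
    intro y
    unfold biziplnPMF
    rw [← integral_const_mul]
    congr 1
    funext w
    unfold BiziplnAux.hfun
    obtain h1 | h1 := eq_or_ne y.1 0 <;> obtain h2 | h2 := eq_or_ne y.2 0 <;>
      (simp [h1, h2]; try ring)
  have hmeas : ∀ y : ℕ × ℕ,
      AEStronglyMeasurable (BiziplnAux.hfun c₁ c₂ pr₁ pr₂ μ₁ μ₂ y)
        (Measure.pi fun _ : Fin q => gaussianReal 0 1) :=
    fun y => (BiziplnAux.hfun_cont c₁ c₂ pr₁ pr₂ μ₁ μ₂ y).aestronglyMeasurable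
  have hInt : Integrable
      (fun w : Fin q → ℝ =>
        (pr₁ * pr₂ * rexp (μ₁ + μ₂)) * rexp (∑ i, (c₁ i + c₂ i) * w i))
      (Measure.pi fun _ : Fin q => gaussianReal 0 1) :=
    (BiziplnAux.integrable_exp_sum_mul _).const_mul _
  have hfin : ∑' y : ℕ × ℕ,
      ∫⁻ w, ‖BiziplnAux.hfun c₁ c₂ pr₁ pr₂ μ₁ μ₂ y w‖₊
        ∂(Measure.pi fun _ : Fin q => gaussianReal 0 1) ≠ ⊤ := by
    have hlt := lintegral_tsum fun y => (hmeas y).enorm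
    simp only [enorm_eq_nnnorm] at hlt
    rw [← hlt]
    have hpw : ∀ w : Fin q → ℝ,
        ∑' y : ℕ × ℕ, (‖BiziplnAux.hfun c₁ c₂ pr₁ pr₂ μ₁ μ₂ y w‖₊ : ENNReal)
          = ENNReal.ofReal
              ((pr₁ * pr₂ * rexp (μ₁ + μ₂)) * rexp (∑ i, (c₁ i + c₂ i) * w i)) := by
      intro w
      rw [← BiziplnAux.hfun_tsum c₁ c₂ pr₁ pr₂ μ₁ μ₂ hp₁.le hp₂.le w,
        ENNReal.ofReal_tsum_of_nonneg
          (fun y => BiziplnAux.hfun_nonneg c₁ c₂ pr₁ pr₂ μ₁ μ₂ hp₁.le hp₂.le y w)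
          (BiziplnAux.hfun_summable c₁ c₂ pr₁ pr₂ μ₁ μ₂ hp₁.le hp₂.le w)]
      exact tsum_congr fun y => Real.enorm_eq_ofReal
        (BiziplnAux.hfun_nonneg c₁ c₂ pr₁ pr₂ μ₁ μ₂ hp₁.le hp₂.le y w)
    rw [lintegral_congr hpw]
    exact hInt.lintegral_lt_top.ne
  have hmain : (∑' y : ℕ × ℕ, (y.1 : ℝ) * (y.2 : ℝ) * biziplnPMF c₁ c₂ pr₁ pr₂ μ₁ μ₂ y.1 y.2)
      = E₁ * E₂ * rexp σ₁₂ := by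
    calc (∑' y : ℕ × ℕ, (y.1 : ℝ) * (y.2 : ℝ) * biziplnPMF c₁ c₂ pr₁ pr₂ μ₁ μ₂ y.1 y.2)
        = ∑' y : ℕ × ℕ, ∫ w : Fin q → ℝ, BiziplnAux.hfun c₁ c₂ pr₁ pr₂ μ₁ μ₂ y w
            ∂(Measure.pi fun _ : Fin q => gaussianReal 0 1) := tsum_congr hstepA
      _ = ∫ w : Fin q → ℝ, ∑' y : ℕ × ℕ, BiziplnAux.hfun c₁ c₂ pr₁ pr₂ μ₁ μ₂ y w
            ∂(Measure.pi fun _ : Fin q => gaussianReal 0 1) :=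
          (integral_tsum hmeas hfin).symm
      _ = ∫ w : Fin q → ℝ,
            (pr₁ * pr₂ * rexp (μ₁ + μ₂)) * rexp (∑ i, (c₁ i + c₂ i) * w i)
            ∂(Measure.pi fun _ : Fin q => gaussianReal 0 1) := by
          congr 1
          funext w
          exact BiziplnAux.hfun_tsum c₁ c₂ pr₁ pr₂ μ₁ μ₂ hp₁.le hp₂.le w
      _ = (pr₁ * pr₂ * rexp (μ₁ + μ₂)) * rexp ((∑ i, (c₁ i + c₂ i) ^ 2) / 2) := by
          rw [integral_const_mul, BiziplnAux.integral_exp_sum_mul]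
      _ = E₁ * E₂ * rexp σ₁₂ := by
          subst hE₁ hE₂ hσ₁₂
          have hsq : (∑ i, (c₁ i + c₂ i) ^ 2)
              = (∑ i, c₁ i ^ 2) + (∑ i, c₂ i ^ 2) + 2 * ∑ i, c₁ i * c₂ i := by
            calc (∑ i, (c₁ i + c₂ i) ^ 2)
                = ∑ i, (c₁ i ^ 2 + c₂ i ^ 2 + 2 * (c₁ i * c₂ i)) :=
                  Finset.sum_congr rfl fun i _ => by ring
              _ = (∑ i, c₁ i ^ 2) + (∑ i, c₂ i ^ 2) + 2 * ∑ i, c₁ i * c₂ i := by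
                  rw [Finset.sum_add_distrib, Finset.sum_add_distrib, ← Finset.mul_sum]
          have hcomb : ((∑ i, c₁ i ^ 2) + (∑ i, c₂ i ^ 2) + 2 * ∑ i, c₁ i * c₂ i) / 2
              = (∑ i, c₁ i ^ 2) / 2 + ((∑ i, c₂ i ^ 2) / 2 + ∑ i, c₁ i * c₂ i) := by
            ring
          rw [hsq, hcomb, Real.exp_add, Real.exp_add, Real.exp_add, Real.exp_add, Real.exp_add]
          ring
  rw [hmain]
  ring
end

section
/- Let Y follow the univariate zero-inflated Poisson log-normal distribution ZIPLN(π, μ, σ²) with σ > 0. Then Y is overdispersed: Var(Y) > E[Y], i.e. ∑_{y=0}^∞ y²·p(y) − (∑_{y=0}^∞ y·p(y))² > ∑_{y=0}^∞ y·p(y). -/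
open MeasureTheory ProbabilityTheory Real

open scoped NNReal ENNReal

lemma tsum_exp_series (x : ℝ) : ∑' y : ℕ, x ^ y / y.factorial = Real.exp x := by
  rw [Real.exp_eq_exp_ℝ, NormedSpace.exp_eq_tsum_div]

lemma summable_y_mul (x : ℝ) : Summable (fun y : ℕ => (y : ℝ) * (x ^ y / y.factorial)) := by
  rw [← summable_nat_add_iff 1]
  have : (fun y : ℕ => ((y + 1 : ℕ) : ℝ) * (x ^ (y + 1) / (y + 1).factorial))
      = fun y : ℕ => x * (x ^ y / y.factorial) := by
    funext y
    rw [Nat.factorial_succ, pow_succ]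
    push_cast
    field_simp
  rw [this]
  exact (Real.summable_pow_div_factorial x).mul_left x

lemma tsum_y_mul (x : ℝ) : ∑' y : ℕ, (y : ℝ) * (x ^ y / y.factorial) = x * Real.exp x := by
  rw [(summable_y_mul x).tsum_eq_zero_add]
  simp only [Nat.cast_zero, zero_mul, zero_add]
  have : (fun y : ℕ => ((y + 1 : ℕ) : ℝ) * (x ^ (y + 1) / (y + 1).factorial))
      = fun y : ℕ => x * (x ^ y / y.factorial) := by
    funext y
    rw [Nat.factorial_succ, pow_succ]
    push_cast
    field_simp
  rw [this, tsum_mul_left, tsum_exp_series]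

lemma summable_y2_mul (x : ℝ) : Summable (fun y : ℕ => (y : ℝ)^2 * (x ^ y / y.factorial)) := by
  rw [← summable_nat_add_iff 1]
  have : (fun y : ℕ => ((y + 1 : ℕ) : ℝ)^2 * (x ^ (y + 1) / (y + 1).factorial))
      = fun y : ℕ => x * ((y : ℝ) * (x ^ y / y.factorial)) + x * (x ^ y / y.factorial) := by
    funext y
    rw [Nat.factorial_succ, pow_succ]
    push_cast
    field_simp
    ring
  rw [this]
  exact ((summable_y_mul x).mul_left x).add ((Real.summable_pow_div_factorial x).mul_left x)

lemma tsum_y2_mul (x : ℝ) :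
    ∑' y : ℕ, (y : ℝ)^2 * (x ^ y / y.factorial) = (x + x^2) * Real.exp x := by
  rw [(summable_y2_mul x).tsum_eq_zero_add]
  simp only [Nat.cast_zero, zero_mul, zero_add, ne_eq, OfNat.ofNat_ne_zero,
    not_false_eq_true, zero_pow]
  have : (fun y : ℕ => ((y + 1 : ℕ) : ℝ)^2 * (x ^ (y + 1) / (y + 1).factorial))
      = fun y : ℕ => x * ((y : ℝ) * (x ^ y / y.factorial)) + x * (x ^ y / y.factorial) := by
    funext y
    rw [Nat.factorial_succ, pow_succ]
    push_cast
    field_simp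
    ring
  rw [this, Summable.tsum_add ((summable_y_mul x).mul_left x)
    ((Real.summable_pow_div_factorial x).mul_left x),
    tsum_mul_left, tsum_mul_left, tsum_y_mul, tsum_exp_series]
  ring

lemma gauss_pdf_smul (v : ℝ≥0) (f : ℝ → ℝ) (hv : v ≠ 0) :
    ∫ z, f z ∂(gaussianReal 0 v) = ∫ x, gaussianPDFReal 0 v x * f x := by
  rw [gaussianReal_of_var_ne_zero 0 hv]
  have hmeas : Measurable (fun x => (gaussianPDFReal 0 v x).toNNReal) :=
    (measurable_gaussianPDFReal 0 v).real_toNNReal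
  have : (gaussianPDF 0 v) = fun x => ((gaussianPDFReal 0 v x).toNNReal : ℝ≥0∞) := rfl
  rw [this, integral_withDensity_eq_integral_smul hmeas]
  congr 1
  funext x
  rw [NNReal.smul_def, smul_eq_mul, Real.coe_toNNReal _ (gaussianPDFReal_nonneg 0 v x)]

lemma gauss_pdf_mul_exp (v : ℝ≥0) (hv : v ≠ 0) (t x : ℝ) :
    gaussianPDFReal 0 v x * Real.exp (t * x)
      = Real.exp (v * t^2 / 2) * gaussianPDFReal (v * t) v x := by
  have hv' : (v : ℝ) ≠ 0 := by exact_mod_cast hv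
  simp only [gaussianPDFReal]
  have h : -(x - 0)^2/(2*(v:ℝ)) + t*x = (v:ℝ)*t^2/2 + -(x - (v:ℝ)*t)^2/(2*(v:ℝ)) := by
    field_simp
    ring
  rw [mul_assoc ((Real.sqrt (2 * π * (v:ℝ)))⁻¹), ← Real.exp_add, h, Real.exp_add]
  ring

lemma integrable_exp_gauss (v : ℝ≥0) (hv : v ≠ 0) (t : ℝ) :
    Integrable (fun z => Real.exp (t * z)) (gaussianReal 0 v) := by
  rw [gaussianReal_of_var_ne_zero 0 hv]
  have hmeas : Measurable (fun x => (gaussianPDFReal 0 v x).toNNReal) :=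
    (measurable_gaussianPDFReal 0 v).real_toNNReal
  have h0 : (gaussianPDF 0 v) = fun x => ((gaussianPDFReal 0 v x).toNNReal : ℝ≥0∞) := rfl
  rw [h0, integrable_withDensity_iff_integrable_smul hmeas]
  have : (fun x => (gaussianPDFReal 0 v x).toNNReal • Real.exp (t * x))
      = fun x => Real.exp (v * t^2 / 2) * gaussianPDFReal (v * t) v x := by
    funext x
    rw [NNReal.smul_def, smul_eq_mul, Real.coe_toNNReal _ (gaussianPDFReal_nonneg 0 v x),
      gauss_pdf_mul_exp v hv t x]
  rw [this]
  exact (integrable_gaussianPDFReal (v*t) v).const_mul _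

lemma integral_exp_gauss (v : ℝ≥0) (hv : v ≠ 0) (t : ℝ) :
    ∫ z, Real.exp (t * z) ∂(gaussianReal 0 v) = Real.exp (v * t^2 / 2) := by
  rw [gauss_pdf_smul v _ hv]
  simp_rw [gauss_pdf_mul_exp v hv t]
  rw [integral_const_mul, integral_gaussianPDFReal_eq_one _ hv, mul_one]

lemma zipln_swap (μ : ℝ) (v : ℝ≥0) (φ : ℕ → ℝ) (g : ℝ → ℝ)
    (hφ : ∀ y, 0 ≤ φ y)
    (hg : ∀ x : ℝ, ∑' y : ℕ, φ y * (x ^ y / y.factorial) = g x * Real.exp x)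
    (hgs : ∀ x : ℝ, Summable (fun y : ℕ => φ y * (x ^ y / y.factorial)))
    (hgnn : ∀ x : ℝ, 0 ≤ x → 0 ≤ g x)
    (hφm : ∀ y : ℕ, Continuous (fun z : ℝ =>
      φ y * (Real.exp (-Real.exp (μ+z)) * Real.exp ((μ+z)*y) / y.factorial)))
    (hint : Integrable (fun z => g (Real.exp (μ + z))) (gaussianReal 0 v)) :
    ∑' y : ℕ, (∫ z, φ y * (Real.exp (-Real.exp (μ+z)) * Real.exp ((μ+z)*y) / y.factorial)
        ∂(gaussianReal 0 v))
      = ∫ z, g (Real.exp (μ + z)) ∂(gaussianReal 0 v) := by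
  set ν := gaussianReal 0 v with hν
  set f : ℕ → ℝ → ℝ := fun y z =>
    φ y * (Real.exp (-Real.exp (μ+z)) * Real.exp ((μ+z)*y) / y.factorial) with hf
  have hfnn : ∀ (y : ℕ) (z : ℝ), 0 ≤ f y z := by
    intro y z
    have := hφ y
    have h2 : (0:ℝ) < y.factorial := by exact_mod_cast y.factorial_pos
    positivity
  have hrw : ∀ z : ℝ, (fun y : ℕ => f y z)
      = fun y : ℕ => Real.exp (-Real.exp (μ+z)) * (φ y * ((Real.exp (μ+z)) ^ y / y.factorial)) := by
    intro z
    funext y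
    simp only [hf]
    rw [mul_comm (μ+z) (y:ℝ), Real.exp_nat_mul]
    ring
  have hptsum : ∀ z : ℝ, ∑' y : ℕ, f y z = g (Real.exp (μ+z)) := by
    intro z
    rw [hrw z, tsum_mul_left, hg]
    rw [Real.exp_neg]
    field_simp
  have hpsummable : ∀ z : ℝ, Summable (fun y : ℕ => f y z) := by
    intro z
    rw [hrw z]
    exact (hgs _).mul_left _
  have hmeas : ∀ y : ℕ, AEStronglyMeasurable (f y) ν := fun y => (hφm y).aestronglyMeasurable
  have hfin : ∑' y : ℕ, ∫⁻ z, ‖f y z‖₊ ∂ν ≠ ⊤ := by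
    rw [← lintegral_tsum (fun y => (hφm y).measurable.nnnorm.coe_nnreal_ennreal.aemeasurable)]
    have : ∀ z : ℝ, ∑' y : ℕ, (‖f y z‖₊ : ℝ≥0∞) = ENNReal.ofReal (g (Real.exp (μ+z))) := by
      intro z
      have h1 : ∀ y : ℕ, (‖f y z‖₊ : ℝ≥0∞) = ENNReal.ofReal (f y z) := fun y =>
        Real.enorm_eq_ofReal (hfnn y z)
      simp_rw [h1]
      rw [← ENNReal.ofReal_tsum_of_nonneg (fun y => hfnn y z) (hpsummable z), hptsum z]
    refine ne_of_eq_of_ne (lintegral_congr this) ?_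
    rw [lintegral_ofReal_ne_top_iff_integrable hint.aestronglyMeasurable
      (ae_of_all _ fun z => hgnn _ (Real.exp_pos _).le)]
    exact hint
  rw [← MeasureTheory.integral_tsum hmeas hfin]
  exact integral_congr_ae (ae_of_all _ fun z => hptsum z)

/-- A ZIPLN(π, μ, σ²) random variable with σ > 0 is overdispersed:
`Var(Y) = E[Y²] − E[Y]² > E[Y]`. -/
theorem zipln_overdispersed (pr μ σ : ℝ) (hpr : pr ∈ Set.Ioc (0 : ℝ) 1) (hσ : 0 < σ) :
    (∑' y : ℕ, (y : ℝ) ^ 2 * ziplnPMF pr μ σ y)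
        - (∑' y : ℕ, (y : ℝ) * ziplnPMF pr μ σ y) ^ 2
      > ∑' y : ℕ, (y : ℝ) * ziplnPMF pr μ σ y := by
  obtain ⟨hpr0, hpr1⟩ := hpr
  set v : ℝ≥0 := ⟨σ ^ 2, sq_nonneg σ⟩ with hvdef
  have hv : v ≠ 0 := by
    intro h
    have : (v : ℝ) = 0 := by rw [h]; simp
    rw [hvdef] at this
    change σ ^ 2 = 0 at this
    nlinarith
  have hvR : (v : ℝ) = σ ^ 2 := rfl
  set ν := gaussianReal 0 v with hν
  -- integrability of λ and λ + λ²
  have hintL : Integrable (fun z => Real.exp (μ + z)) ν := by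
    have : (fun z : ℝ => Real.exp (μ + z)) = fun z => Real.exp μ * Real.exp (1 * z) := by
      funext z
      rw [← Real.exp_add]
      ring_nf
    rw [this]
    exact (integrable_exp_gauss v hv 1).const_mul _
  have hintL2 : Integrable (fun z => Real.exp (μ + z) + (Real.exp (μ + z))^2) ν := by
    refine hintL.add ?_
    have : (fun z : ℝ => (Real.exp (μ + z))^2) = fun z => Real.exp (2*μ) * Real.exp (2 * z) := by
      funext z
      rw [← Real.exp_add, ← Real.exp_nat_mul]
      norm_num
      ring_nf
    rw [this]
    exact (integrable_exp_gauss v hv 2).const_mul _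
  -- first moment
  have hT1 : (∑' y : ℕ, (y : ℝ) * ziplnPMF pr μ σ y)
      = pr * ∫ z, Real.exp (μ + z) ∂ν := by
    have hrw : (fun y : ℕ => (y : ℝ) * ziplnPMF pr μ σ y)
        = fun y : ℕ => pr * (∫ z, (y : ℝ) *
            (Real.exp (-Real.exp (μ+z)) * Real.exp ((μ+z)*y) / y.factorial) ∂ν) := by
      funext y
      rw [integral_const_mul]
      simp only [ziplnPMF]
      cases y with
      | zero => simp
      | succ n => simp only [Nat.succ_ne_zero, if_false, mul_zero, zero_add]; ring
    rw [hrw, tsum_mul_left]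
    congr 1
    exact zipln_swap μ v (fun y : ℕ => (y : ℝ)) (fun x => x)
      (fun y => Nat.cast_nonneg y) (fun x => tsum_y_mul x) (fun x => summable_y_mul x)
      (fun x hx => hx) (fun y => by fun_prop) hintL
  -- second moment
  have hT2 : (∑' y : ℕ, (y : ℝ)^2 * ziplnPMF pr μ σ y)
      = pr * ∫ z, (Real.exp (μ + z) + (Real.exp (μ + z))^2) ∂ν := by
    have hrw : (fun y : ℕ => (y : ℝ)^2 * ziplnPMF pr μ σ y)
        = fun y : ℕ => pr * (∫ z, (y : ℝ)^2 *
            (Real.exp (-Real.exp (μ+z)) * Real.exp ((μ+z)*y) / y.factorial) ∂ν) := by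
      funext y
      rw [integral_const_mul]
      simp only [ziplnPMF]
      cases y with
      | zero => simp
      | succ n => simp only [Nat.succ_ne_zero, if_false, mul_zero, zero_add]; ring
    rw [hrw, tsum_mul_left]
    congr 1
    exact zipln_swap μ v (fun y : ℕ => (y : ℝ)^2) (fun x => x + x^2)
      (fun y => sq_nonneg _) (fun x => tsum_y2_mul x) (fun x => summable_y2_mul x)
      (fun x hx => by positivity) (fun y => by fun_prop) hintL2
  -- evaluate the integrals
  have hm1 : ∫ z, Real.exp (μ + z) ∂ν = Real.exp μ * Real.exp ((v:ℝ) * 1^2 / 2) := by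
    have : (fun z : ℝ => Real.exp (μ + z)) = fun z => Real.exp μ * Real.exp (1 * z) := by
      funext z
      rw [← Real.exp_add]
      ring_nf
    rw [this, integral_const_mul, integral_exp_gauss v hv 1]
  have hm2 : ∫ z, (Real.exp (μ + z) + (Real.exp (μ + z))^2) ∂ν
      = Real.exp μ * Real.exp ((v:ℝ) * 1^2 / 2)
        + Real.exp (2*μ) * Real.exp ((v:ℝ) * 2^2 / 2) := by
    have h2 : (fun z : ℝ => (Real.exp (μ + z))^2)
        = fun z => Real.exp (2*μ) * Real.exp (2 * z) := by
      funext z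
      rw [← Real.exp_add, ← Real.exp_nat_mul]
      norm_num
      ring_nf
    have hi2 : Integrable (fun z => (Real.exp (μ + z))^2) ν := by
      rw [h2]
      exact (integrable_exp_gauss v hv 2).const_mul _
    rw [integral_add hintL hi2, hm1, h2, integral_const_mul, integral_exp_gauss v hv 2]
  rw [hT1, hT2, hm1, hm2]
  -- final arithmetic
  have hv0 : (0:ℝ) < (v:ℝ) := by rw [hvR]; positivity
  have hev : 1 < Real.exp (v:ℝ) := by
    rw [← Real.exp_zero]
    exact Real.exp_lt_exp.mpr hv0
  have e1 : Real.exp ((v:ℝ) * 1^2 / 2) * Real.exp ((v:ℝ) * 1^2 / 2) = Real.exp (v:ℝ) := by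
    rw [← Real.exp_add]
    ring_nf
  have e2 : Real.exp ((v:ℝ) * 2^2 / 2) = Real.exp (v:ℝ) * Real.exp (v:ℝ) := by
    rw [← Real.exp_add]
    ring_nf
  have e3 : Real.exp (2*μ) = Real.exp μ * Real.exp μ := by
    rw [← Real.exp_add]
    ring_nf
  set A := Real.exp μ with hA
  set B := Real.exp ((v:ℝ) * 1^2 / 2) with hB
  set C := Real.exp (v:ℝ) with hC
  have hApos : 0 < A := Real.exp_pos _
  have hBpos : 0 < B := Real.exp_pos _
  have hCpos : 0 < C := Real.exp_pos _
  rw [e2, e3]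
  have key : pr * (A * A * (C * C)) > pr^2 * (A * B)^2 := by
    have h1 : (A * B)^2 = A * A * C := by rw [pow_two]; rw [← e1]; ring
    rw [h1]
    have hfac : 0 < pr * (A * A) * C := by positivity
    calc pr^2 * (A * A * C) = (pr * (A * A) * C) * pr := by ring
      _ < (pr * (A * A) * C) * C := by
          exact mul_lt_mul_of_pos_left (lt_of_le_of_lt hpr1 hev) hfac
      _ = pr * (A * A * (C * C)) := by ring
  nlinarith [key]
end

section
/- Let (Y₁, Y₂) follow the bivariate zero-inflated Poisson log-normal model with parameters (π₁, π₂, μ₁, μ₂, c₁, c₂), and let σ₁₂ = c₁·c₂. Then the covariance Cov(Y₁, Y₂) has the same sign as σ₁₂: Cov(Y₁, Y₂) > 0 if σ₁₂ > 0, Cov(Y₁, Y₂) = 0 if σ₁₂ = 0, and Cov(Y₁, Y₂) < 0 if σ₁₂ < 0. -/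
open MeasureTheory ProbabilityTheory Real

open scoped ENNReal NNReal

noncomputable def zipTerm (pr s : ℝ) (y : ℕ) : ℝ :=
  (1 - pr) * (if y = 0 then 1 else 0) +
    pr * (Real.exp (-Real.exp s) * Real.exp (s * y) / (Nat.factorial y))

lemma poisson_summable (x : ℝ) : Summable (fun n : ℕ => (n : ℝ) * x ^ n / n.factorial) := by
  rw [← summable_nat_add_iff 1]
  have hsucc : ∀ n : ℕ, ((n+1 : ℕ) : ℝ) * x ^ (n+1) / (n+1).factorial
      = x * (x ^ n / n.factorial) := by
    intro n
    rw [Nat.factorial_succ]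
    push_cast
    have h1 : ((n:ℝ)+1) ≠ 0 := by positivity
    field_simp
    ring
  simpa only [hsucc] using (Real.summable_pow_div_factorial x).mul_left x

lemma exp_eq_tsum' (x : ℝ) : Real.exp x = ∑' n : ℕ, x ^ n / n.factorial := by
  rw [Real.exp_eq_exp_ℝ, NormedSpace.exp_eq_tsum_div]

lemma poisson_series (x : ℝ) : ∑' n : ℕ, (n : ℝ) * x ^ n / n.factorial = x * Real.exp x := by
  have hsucc : ∀ n : ℕ, ((n+1 : ℕ) : ℝ) * x ^ (n+1) / (n+1).factorial
      = x * (x ^ n / n.factorial) := by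
    intro n
    rw [Nat.factorial_succ]
    push_cast
    have h1 : ((n:ℝ)+1) ≠ 0 := by positivity
    field_simp
    ring
  rw [Summable.tsum_eq_zero_add (poisson_summable x)]
  simp only [hsucc, Nat.cast_zero, zero_mul, zero_div, zero_add]
  rw [tsum_mul_left, exp_eq_tsum' x]

lemma zipTerm_nonneg {pr : ℝ} (h0 : 0 ≤ pr) (h1 : pr ≤ 1) (s : ℝ) (y : ℕ) :
    0 ≤ zipTerm pr s y := by
  unfold zipTerm
  have : (0:ℝ) ≤ (if y = 0 then (1:ℝ) else 0) := by positivity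
  have h2 : (0:ℝ) ≤ 1 - pr := by linarith
  positivity

lemma zipTerm_le_one {pr : ℝ} (h0 : 0 ≤ pr) (h1 : pr ≤ 1) (s : ℝ) (y : ℕ) :
    zipTerm pr s y ≤ 1 := by
  unfold zipTerm
  have hb : Real.exp (-Real.exp s) * Real.exp (s * y) / (Nat.factorial y) ≤ 1 := by
    rw [Real.exp_neg]
    have h3 : Real.exp (s * y) = (Real.exp s) ^ y := by
      rw [mul_comm, Real.exp_nat_mul]
    rw [h3, mul_comm, mul_div_assoc]
    have key := Real.pow_div_factorial_le_exp (Real.exp s) (Real.exp_pos s).le y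
    have hE := Real.exp_pos (Real.exp s)
    calc Real.exp s ^ y * ((Real.exp (Real.exp s))⁻¹ / (Nat.factorial y))
        = (Real.exp s ^ y / (Nat.factorial y)) * (Real.exp (Real.exp s))⁻¹ := by ring
      _ ≤ Real.exp (Real.exp s) * (Real.exp (Real.exp s))⁻¹ :=
          mul_le_mul_of_nonneg_right key (inv_nonneg.2 hE.le)
      _ = 1 := mul_inv_cancel₀ hE.ne'
  have hite : (if y = 0 then (1:ℝ) else 0) ≤ 1 := by split <;> norm_num
  have hite0 : (0:ℝ) ≤ (if y = 0 then (1:ℝ) else 0) := by positivity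
  have h2 : (0:ℝ) ≤ 1 - pr := by linarith
  nlinarith [mul_le_mul_of_nonneg_left hite h2, mul_le_mul_of_nonneg_left hb h0]

lemma mul_zipTerm_eq (pr s : ℝ) (y : ℕ) :
    (y : ℝ) * zipTerm pr s y
      = (pr * Real.exp (-Real.exp s)) * ((y : ℝ) * (Real.exp s) ^ y / y.factorial) := by
  unfold zipTerm
  cases y with
  | zero => simp
  | succ n =>
    rw [if_neg (Nat.succ_ne_zero n)]
    have h3 : Real.exp (s * (n+1 : ℕ)) = (Real.exp s) ^ (n+1 : ℕ) := by
      rw [mul_comm, Real.exp_nat_mul]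
    rw [h3]
    push_cast
    ring

lemma summable_mul_zipTerm (pr s : ℝ) :
    Summable (fun y : ℕ => (y : ℝ) * zipTerm pr s y) := by
  simp only [mul_zipTerm_eq]
  exact (poisson_summable (Real.exp s)).mul_left _

lemma mul_zipTerm_nonneg {pr : ℝ} (h0 : 0 ≤ pr) (h1 : pr ≤ 1) (s : ℝ) (y : ℕ) :
    0 ≤ (y : ℝ) * zipTerm pr s y :=
  mul_nonneg (Nat.cast_nonneg y) (zipTerm_nonneg h0 h1 s y)

lemma tsum_mul_zipTerm (pr s : ℝ) :
    ∑' y : ℕ, (y : ℝ) * zipTerm pr s y = pr * Real.exp s := by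
  simp only [mul_zipTerm_eq]
  rw [tsum_mul_left, poisson_series, Real.exp_neg]
  have := Real.exp_pos (Real.exp s)
  field_simp

lemma tsum_ofReal_mul_zipTerm {pr : ℝ} (h0 : 0 ≤ pr) (h1 : pr ≤ 1) (s : ℝ) :
    ∑' y : ℕ, ENNReal.ofReal ((y : ℝ) * zipTerm pr s y)
      = ENNReal.ofReal (pr * Real.exp s) := by
  rw [← ENNReal.ofReal_tsum_of_nonneg (fun y => mul_zipTerm_nonneg h0 h1 s y)
    (summable_mul_zipTerm pr s), tsum_mul_zipTerm]

lemma continuous_zipTerm (pr : ℝ) (y : ℕ) : Continuous (fun s => zipTerm pr s y) := by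
  unfold zipTerm
  fun_prop
lemma gaussian_exp_integrable (t : ℝ) :
    Integrable (fun x : ℝ => Real.exp (t * x)) (gaussianReal 0 1) := by
  rw [gaussianReal_of_var_ne_zero 0 one_ne_zero]
  have hpdf : (gaussianPDF 0 1) = fun x => ((Real.toNNReal (gaussianPDFReal 0 1 x) : ℝ≥0) : ℝ≥0∞) := rfl
  rw [hpdf, integrable_withDensity_iff_integrable_smul
    ((measurable_gaussianPDFReal 0 1).real_toNNReal)]
  have : (fun x : ℝ => (Real.toNNReal (gaussianPDFReal 0 1 x)) • Real.exp (t * x))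
      = fun x : ℝ => ((Real.sqrt (2 * π))⁻¹ * Real.exp (t^2/2)) * Real.exp (-(1/2) * (x - t)^2) := by
    funext x
    rw [NNReal.smul_def, Real.coe_toNNReal _ (gaussianPDFReal_nonneg 0 1 x)]
    rw [gaussianPDFReal, smul_eq_mul]
    push_cast
    rw [mul_one, mul_one, sub_zero, mul_assoc, mul_assoc, ← Real.exp_add, ← Real.exp_add]
    congr 1
    ring_nf
  rw [this]
  exact ((integrable_exp_neg_mul_sq (by norm_num : (0:ℝ) < 1/2)).comp_sub_right t).const_mul _

lemma gaussian_exp_integral (t : ℝ) :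
    ∫ x, Real.exp (t * x) ∂(gaussianReal 0 1) = Real.exp (t^2/2) := by
  rw [gaussianReal_of_var_ne_zero 0 one_ne_zero]
  have hpdf : (gaussianPDF 0 1) = fun x => ((Real.toNNReal (gaussianPDFReal 0 1 x) : ℝ≥0) : ℝ≥0∞) := rfl
  rw [hpdf, integral_withDensity_eq_integral_smul
    ((measurable_gaussianPDFReal 0 1).real_toNNReal)]
  have heq : (fun x : ℝ => (Real.toNNReal (gaussianPDFReal 0 1 x)) • Real.exp (t * x))
      = fun x : ℝ => ((Real.sqrt (2 * π))⁻¹ * Real.exp (t^2/2)) * Real.exp (-(1/2) * (x - t)^2) := by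
    funext x
    rw [NNReal.smul_def, Real.coe_toNNReal _ (gaussianPDFReal_nonneg 0 1 x)]
    rw [gaussianPDFReal, smul_eq_mul]
    push_cast
    rw [mul_one, mul_one, sub_zero, mul_assoc, mul_assoc, ← Real.exp_add, ← Real.exp_add]
    congr 1
    ring_nf
  rw [heq, integral_const_mul]
  have h1 : ∫ x : ℝ, Real.exp (-(1/2) * (x - t)^2) = ∫ x : ℝ, Real.exp (-(1/2) * x^2) :=
    integral_sub_right_eq_self (fun x => Real.exp (-(1/2) * x^2)) t
  rw [h1, integral_gaussian]
  have h2 : Real.sqrt (π / (1/2)) = Real.sqrt (2 * π) := by norm_num [mul_comm]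
  rw [h2, mul_comm ((Real.sqrt (2*π))⁻¹), mul_assoc, inv_mul_cancel₀, mul_one]
  positivity

lemma gaussian_pi_integrable {q : ℕ} (a : Fin q → ℝ) :
    Integrable (fun w : Fin q → ℝ => ∏ i, Real.exp (a i * w i))
      (Measure.pi fun _ : Fin q => gaussianReal 0 1) := by
  letI : MeasureSpace ℝ := ⟨gaussianReal 0 1⟩
  haveI : SigmaFinite (volume : Measure ℝ) := inferInstanceAs (SigmaFinite (gaussianReal 0 1))
  exact MeasureTheory.Integrable.fintype_prod (f := fun (i : Fin q) (x : ℝ) => Real.exp (a i * x))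
    fun i => gaussian_exp_integrable (a i)

lemma gaussian_pi_integral {q : ℕ} (a : Fin q → ℝ) :
    ∫ w : Fin q → ℝ, ∏ i, Real.exp (a i * w i) ∂(Measure.pi fun _ : Fin q => gaussianReal 0 1)
      = Real.exp ((∑ i, a i ^ 2) / 2) := by
  letI : MeasureSpace ℝ := ⟨gaussianReal 0 1⟩
  haveI : SigmaFinite (volume : Measure ℝ) := inferInstanceAs (SigmaFinite (gaussianReal 0 1))
  have h := MeasureTheory.integral_fintype_prod_eq_prod (𝕜 := ℝ) (μ := fun _ : Fin q => gaussianReal 0 1)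
    (fun (i : Fin q) (x : ℝ) => Real.exp (a i * x))
  have h2 : ∀ i : Fin q, (∫ x : ℝ, Real.exp (a i * x)) = Real.exp (a i ^ 2 / 2) :=
    fun i => gaussian_exp_integral (a i)
  calc ∫ w : Fin q → ℝ, ∏ i, Real.exp (a i * w i)
        ∂(Measure.pi fun _ : Fin q => gaussianReal 0 1)
      = ∫ w : Fin q → ℝ, ∏ i, Real.exp (a i * w i) := rfl
    _ = ∏ i, ∫ x : ℝ, Real.exp (a i * x) := h
    _ = ∏ i, Real.exp (a i ^ 2 / 2) := by simp_rw [h2]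
    _ = Real.exp ((∑ i, a i ^ 2) / 2) := by
        rw [← Real.exp_sum, Finset.sum_div]

/-- In the bivariate zero-inflated Poisson log-normal model, the covariance
`Cov(Y₁, Y₂) = ∑ y₁·y₂·p(y₁,y₂) − E₁·E₂` has the same sign as `σ₁₂ = c₁·c₂`. -/
theorem bizipln_covariance_sign {q : ℕ} (hq : 1 ≤ q) (c₁ c₂ : Fin q → ℝ)
    (pr₁ pr₂ μ₁ μ₂ : ℝ)
    (hpr₁ : pr₁ ∈ Set.Ioc (0 : ℝ) 1) (hpr₂ : pr₂ ∈ Set.Ioc (0 : ℝ) 1)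
    (σ₁₂ E₁ E₂ cov : ℝ)
    (hσ₁₂ : σ₁₂ = ∑ i, c₁ i * c₂ i)
    (hE₁ : E₁ = pr₁ * exp (μ₁ + (∑ i, c₁ i ^ 2) / 2))
    (hE₂ : E₂ = pr₂ * exp (μ₂ + (∑ i, c₂ i ^ 2) / 2))
    (hcov : cov = (∑' y : ℕ × ℕ,
        (y.1 : ℝ) * (y.2 : ℝ) * biziplnPMF c₁ c₂ pr₁ pr₂ μ₁ μ₂ y.1 y.2) - E₁ * E₂) :
    (0 < σ₁₂ → 0 < cov) ∧ (σ₁₂ = 0 → cov = 0) ∧ (σ₁₂ < 0 → cov < 0) := by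
  obtain ⟨hp1, hp1'⟩ := hpr₁
  obtain ⟨hp2, hp2'⟩ := hpr₂
  have hΓprob : IsProbabilityMeasure (Measure.pi fun _ : Fin q => gaussianReal 0 1) :=
    inferInstance
  have hFc : ∀ (y : ℕ × ℕ), Continuous (fun w : Fin q → ℝ => (y.1:ℝ) * (y.2:ℝ) *
      (zipTerm pr₁ (μ₁ + ∑ i, c₁ i * w i) y.1 * zipTerm pr₂ (μ₂ + ∑ i, c₂ i * w i) y.2)) := by
    intro y
    have h1 : Continuous (fun w : Fin q → ℝ => μ₁ + ∑ i, c₁ i * w i) := by fun_prop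
    have h2 : Continuous (fun w : Fin q → ℝ => μ₂ + ∑ i, c₂ i * w i) := by fun_prop
    exact continuous_const.mul (((continuous_zipTerm pr₁ y.1).comp h1).mul
      ((continuous_zipTerm pr₂ y.2).comp h2))
  have hFnn : ∀ (y : ℕ × ℕ) (w : Fin q → ℝ), 0 ≤ (y.1:ℝ) * (y.2:ℝ) *
      (zipTerm pr₁ (μ₁ + ∑ i, c₁ i * w i) y.1 * zipTerm pr₂ (μ₂ + ∑ i, c₂ i * w i) y.2) := by
    intro y w
    have h1 := zipTerm_nonneg hp1.le hp1' (μ₁ + ∑ i, c₁ i * w i) y.1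
    have h2 := zipTerm_nonneg hp2.le hp2' (μ₂ + ∑ i, c₂ i * w i) y.2
    positivity
  have hterm : ∀ y : ℕ × ℕ, (y.1:ℝ) * (y.2:ℝ) * biziplnPMF c₁ c₂ pr₁ pr₂ μ₁ μ₂ y.1 y.2
      = (∫⁻ w, ENNReal.ofReal ((y.1:ℝ) * (y.2:ℝ) *
          (zipTerm pr₁ (μ₁ + ∑ i, c₁ i * w i) y.1 * zipTerm pr₂ (μ₂ + ∑ i, c₂ i * w i) y.2))
          ∂(Measure.pi fun _ : Fin q => gaussianReal 0 1)).toReal := by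
    intro y
    have hpmf : biziplnPMF c₁ c₂ pr₁ pr₂ μ₁ μ₂ y.1 y.2
        = ∫ w, zipTerm pr₁ (μ₁ + ∑ i, c₁ i * w i) y.1 * zipTerm pr₂ (μ₂ + ∑ i, c₂ i * w i) y.2
          ∂(Measure.pi fun _ : Fin q => gaussianReal 0 1) := rfl
    rw [hpmf, ← integral_const_mul,
      integral_eq_lintegral_of_nonneg_ae (Filter.Eventually.of_forall (hFnn y))
        (hFc y).aestronglyMeasurable]
  have hLne : ∀ y : ℕ × ℕ, (∫⁻ w, ENNReal.ofReal ((y.1:ℝ) * (y.2:ℝ) *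
      (zipTerm pr₁ (μ₁ + ∑ i, c₁ i * w i) y.1 * zipTerm pr₂ (μ₂ + ∑ i, c₂ i * w i) y.2))
      ∂(Measure.pi fun _ : Fin q => gaussianReal 0 1)) ≠ ∞ := by
    intro y
    have hb : (∫⁻ w, ENNReal.ofReal ((y.1:ℝ) * (y.2:ℝ) *
        (zipTerm pr₁ (μ₁ + ∑ i, c₁ i * w i) y.1 * zipTerm pr₂ (μ₂ + ∑ i, c₂ i * w i) y.2))
        ∂(Measure.pi fun _ : Fin q => gaussianReal 0 1))
        ≤ ∫⁻ _, ENNReal.ofReal ((y.1:ℝ) * (y.2:ℝ))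
          ∂(Measure.pi fun _ : Fin q => gaussianReal 0 1) := by
      refine lintegral_mono fun w => ENNReal.ofReal_le_ofReal ?_
      have h1 := zipTerm_nonneg hp1.le hp1' (μ₁ + ∑ i, c₁ i * w i) y.1
      have h2 := zipTerm_nonneg hp2.le hp2' (μ₂ + ∑ i, c₂ i * w i) y.2
      have h3 := zipTerm_le_one hp1.le hp1' (μ₁ + ∑ i, c₁ i * w i) y.1
      have h4 := zipTerm_le_one hp2.le hp2' (μ₂ + ∑ i, c₂ i * w i) y.2
      have h5 : (0:ℝ) ≤ (y.1:ℝ) * (y.2:ℝ) :=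
        mul_nonneg (Nat.cast_nonneg _) (Nat.cast_nonneg _)
      have h6 : zipTerm pr₁ (μ₁ + ∑ i, c₁ i * w i) y.1
          * zipTerm pr₂ (μ₂ + ∑ i, c₂ i * w i) y.2 ≤ 1 := by nlinarith
      nlinarith [mul_le_mul_of_nonneg_left h6 h5]
    refine ne_top_of_le_ne_top ?_ hb
    rw [lintegral_const]
    finiteness
  have hmeas : ∀ y : ℕ × ℕ, AEMeasurable (fun w : Fin q → ℝ => ENNReal.ofReal ((y.1:ℝ) * (y.2:ℝ) *
      (zipTerm pr₁ (μ₁ + ∑ i, c₁ i * w i) y.1 * zipTerm pr₂ (μ₂ + ∑ i, c₂ i * w i) y.2)))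
      (Measure.pi fun _ : Fin q => gaussianReal 0 1) := fun y =>
    (ENNReal.measurable_ofReal.comp (hFc y).measurable).aemeasurable
  have hptw : ∀ w : Fin q → ℝ, (∑' y : ℕ × ℕ, ENNReal.ofReal ((y.1:ℝ) * (y.2:ℝ) *
      (zipTerm pr₁ (μ₁ + ∑ i, c₁ i * w i) y.1 * zipTerm pr₂ (μ₂ + ∑ i, c₂ i * w i) y.2)))
      = ENNReal.ofReal ((pr₁ * Real.exp (μ₁ + ∑ i, c₁ i * w i)) *
          (pr₂ * Real.exp (μ₂ + ∑ i, c₂ i * w i))) := by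
    intro w
    rw [ENNReal.tsum_prod']
    have h2 : ∀ a b : ℕ, ENNReal.ofReal ((a:ℝ) * (b:ℝ) *
        (zipTerm pr₁ (μ₁ + ∑ i, c₁ i * w i) a * zipTerm pr₂ (μ₂ + ∑ i, c₂ i * w i) b))
        = ENNReal.ofReal ((a:ℝ) * zipTerm pr₁ (μ₁ + ∑ i, c₁ i * w i) a)
          * ENNReal.ofReal ((b:ℝ) * zipTerm pr₂ (μ₂ + ∑ i, c₂ i * w i) b) := by
      intro a b
      rw [show (a:ℝ) * (b:ℝ) *
          (zipTerm pr₁ (μ₁ + ∑ i, c₁ i * w i) a * zipTerm pr₂ (μ₂ + ∑ i, c₂ i * w i) b)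
          = ((a:ℝ) * zipTerm pr₁ (μ₁ + ∑ i, c₁ i * w i) a)
            * ((b:ℝ) * zipTerm pr₂ (μ₂ + ∑ i, c₂ i * w i) b) from by ring,
        ENNReal.ofReal_mul (mul_zipTerm_nonneg hp1.le hp1' _ a)]
    simp only [h2]
    simp_rw [ENNReal.tsum_mul_left, ENNReal.tsum_mul_right]
    rw [tsum_ofReal_mul_zipTerm hp1.le hp1', tsum_ofReal_mul_zipTerm hp2.le hp2',
      ← ENNReal.ofReal_mul (by positivity)]
  have hg_eq : (fun w : Fin q → ℝ => (pr₁ * Real.exp (μ₁ + ∑ i, c₁ i * w i)) *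
      (pr₂ * Real.exp (μ₂ + ∑ i, c₂ i * w i)))
      = fun w => (pr₁ * pr₂ * Real.exp (μ₁ + μ₂)) * ∏ i, Real.exp ((c₁ i + c₂ i) * w i) := by
    funext w
    rw [← Real.exp_sum]
    have hsum : ∑ i, (c₁ i + c₂ i) * w i = (∑ i, c₁ i * w i) + ∑ i, c₂ i * w i := by
      rw [← Finset.sum_add_distrib]
      exact Finset.sum_congr rfl fun i _ => by ring
    rw [hsum]
    simp only [Real.exp_add]
    ring
  have hg_nn : (fun _ : Fin q → ℝ => (0:ℝ)) ≤ᵐ[Measure.pi fun _ : Fin q => gaussianReal 0 1]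
      fun w : Fin q → ℝ => (pr₁ * Real.exp (μ₁ + ∑ i, c₁ i * w i)) *
        (pr₂ * Real.exp (μ₂ + ∑ i, c₂ i * w i)) :=
    Filter.Eventually.of_forall fun w => by show (0:ℝ) ≤ _; positivity
  have hg_int : Integrable (fun w : Fin q → ℝ => (pr₁ * Real.exp (μ₁ + ∑ i, c₁ i * w i)) *
      (pr₂ * Real.exp (μ₂ + ∑ i, c₂ i * w i)))
      (Measure.pi fun _ : Fin q => gaussianReal 0 1) := by
    rw [hg_eq]
    exact (gaussian_pi_integrable (fun i => c₁ i + c₂ i)).const_mul _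
  have hsum_eq : (∑' y : ℕ × ℕ,
      (y.1 : ℝ) * (y.2 : ℝ) * biziplnPMF c₁ c₂ pr₁ pr₂ μ₁ μ₂ y.1 y.2)
      = ∫ w, (pr₁ * Real.exp (μ₁ + ∑ i, c₁ i * w i)) *
          (pr₂ * Real.exp (μ₂ + ∑ i, c₂ i * w i))
          ∂(Measure.pi fun _ : Fin q => gaussianReal 0 1) := by
    rw [tsum_congr hterm, ← ENNReal.tsum_toReal_eq hLne, ← lintegral_tsum hmeas,
      lintegral_congr hptw,
      ← ofReal_integral_eq_lintegral_ofReal hg_int hg_nn,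
      ENNReal.toReal_ofReal (integral_nonneg fun w => by show (0:ℝ) ≤ _; positivity)]
  have hint_val : (∫ w, (pr₁ * Real.exp (μ₁ + ∑ i, c₁ i * w i)) *
      (pr₂ * Real.exp (μ₂ + ∑ i, c₂ i * w i))
      ∂(Measure.pi fun _ : Fin q => gaussianReal 0 1))
      = pr₁ * pr₂ * Real.exp (μ₁ + μ₂) * Real.exp ((∑ i, (c₁ i + c₂ i) ^ 2) / 2) := by
    rw [hg_eq, integral_const_mul, gaussian_pi_integral]
  have hd2 : (∑ i, (c₁ i + c₂ i) ^ 2) / 2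
      = (∑ i, c₁ i ^ 2) / 2 + (∑ i, c₂ i ^ 2) / 2 + ∑ i, c₁ i * c₂ i := by
    have : ∑ i, (c₁ i + c₂ i) ^ 2
        = (∑ i, c₁ i ^ 2) + ((∑ i, c₂ i ^ 2) + ∑ i, 2 * (c₁ i * c₂ i)) := by
      rw [← Finset.sum_add_distrib, ← Finset.sum_add_distrib]
      exact Finset.sum_congr rfl fun i _ => by ring
    rw [this, ← Finset.mul_sum]
    ring
  have hS : (∑' y : ℕ × ℕ,
      (y.1 : ℝ) * (y.2 : ℝ) * biziplnPMF c₁ c₂ pr₁ pr₂ μ₁ μ₂ y.1 y.2)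
      = E₁ * E₂ * Real.exp σ₁₂ := by
    rw [hsum_eq, hint_val, hE₁, hE₂, hσ₁₂, hd2]
    simp only [Real.exp_add]
    ring
  have hP : 0 < E₁ * E₂ := by rw [hE₁, hE₂]; positivity
  rw [hcov, hS]
  refine ⟨fun h => ?_, fun h => ?_, fun h => ?_⟩
  · have h1 : 1 < Real.exp σ₁₂ := by
      rw [← Real.exp_zero]; exact Real.exp_lt_exp.2 h
    nlinarith [mul_pos hP (sub_pos.mpr h1)]
  · rw [h, Real.exp_zero, mul_one, sub_self]
  · have h1 : Real.exp σ₁₂ < 1 := by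
      rw [← Real.exp_zero]; exact Real.exp_lt_exp.2 h
    nlinarith [mul_pos hP (sub_pos.mpr h1)]
end

section
/- The parameters of the univariate zero-inflated Poisson log-normal distribution are identified by the first three moments: if π, π′ ∈ (0,1], μ, μ′ ∈ ℝ and σ, σ′ > 0 are such that the distributions ZIPLN(π, μ, σ²) and ZIPLN(π′, μ′, σ′²) have the same first moment, the same second moment and the same third moment, then π = π′, μ = μ′ and σ = σ′. -/
open MeasureTheory ProbabilityTheory Real
open scoped ENNReal NNReal

/-! ### Gaussian exponential integrals -/

lemma pdf_mul_exp (σ t x : ℝ) (hσ : 0 < σ) :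
    gaussianPDFReal 0 ⟨σ ^ 2, sq_nonneg σ⟩ x * exp (t * x)
      = exp (t ^ 2 * σ ^ 2 / 2) * gaussianPDFReal (t * σ ^ 2) ⟨σ ^ 2, sq_nonneg σ⟩ x := by
  simp only [gaussianPDFReal, NNReal.coe_mk]
  change (√(2 * π * σ ^ 2))⁻¹ * rexp (-(x - 0) ^ 2 / (2 * σ ^ 2)) * rexp (t * x) =
    rexp (t ^ 2 * σ ^ 2 / 2) * ((√(2 * π * σ ^ 2))⁻¹ * rexp (-(x - t * σ ^ 2) ^ 2 / (2 * σ ^ 2)))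
  have h2 : (σ:ℝ)^2 ≠ 0 := by positivity
  have key : -(x - 0)^2/(2*σ^2) + t*x = -(x - t*σ^2)^2/(2*σ^2) + t^2*σ^2/2 := by
    field_simp
    ring
  rw [mul_assoc (√(2 * π * σ ^ 2))⁻¹, ← Real.exp_add, key, Real.exp_add]
  ring

lemma integrable_exp_gaussian (σ t : ℝ) (hσ : 0 < σ) :
    Integrable (fun z ↦ exp (t * z)) (gaussianReal 0 ⟨σ ^ 2, sq_nonneg σ⟩) := by
  have hv : (⟨σ ^ 2, sq_nonneg σ⟩ : NNReal) ≠ 0 := by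
    simp [← NNReal.coe_ne_zero]; positivity
  rw [gaussianReal_of_var_ne_zero 0 hv]
  rw [integrable_withDensity_iff (measurable_gaussianPDF 0 ⟨σ ^ 2, sq_nonneg σ⟩)
    (Filter.Eventually.of_forall fun x => ENNReal.ofReal_lt_top)]
  have : (fun x => exp (t * x) * (gaussianPDF 0 ⟨σ ^ 2, sq_nonneg σ⟩ x).toReal)
      = fun x => exp (t ^ 2 * σ ^ 2 / 2) * gaussianPDFReal (t * σ ^ 2) ⟨σ ^ 2, sq_nonneg σ⟩ x := by
    ext x
    show exp (t * x) * (ENNReal.ofReal (gaussianPDFReal 0 ⟨σ ^ 2, sq_nonneg σ⟩ x)).toReal = _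
    rw [ENNReal.toReal_ofReal (gaussianPDFReal_nonneg 0 ⟨σ ^ 2, sq_nonneg σ⟩ x), mul_comm,
      pdf_mul_exp σ t x hσ]
  rw [this]
  exact (integrable_gaussianPDFReal _ _).const_mul _

lemma integral_exp_gaussian (σ t : ℝ) (hσ : 0 < σ) :
    ∫ z, exp (t * z) ∂(gaussianReal 0 ⟨σ ^ 2, sq_nonneg σ⟩) = exp (t ^ 2 * σ ^ 2 / 2) := by
  have hv : (⟨σ ^ 2, sq_nonneg σ⟩ : NNReal) ≠ 0 := by
    simp [← NNReal.coe_ne_zero]; positivity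
  rw [gaussianReal_of_var_ne_zero 0 hv]
  have hd : gaussianPDF 0 (⟨σ ^ 2, sq_nonneg σ⟩ : NNReal)
      = fun x => ((gaussianPDFReal 0 ⟨σ ^ 2, sq_nonneg σ⟩ x).toNNReal : ℝ≥0∞) := by
    rfl
  rw [hd, integral_withDensity_eq_integral_smul
    ((measurable_gaussianPDFReal 0 ⟨σ ^ 2, sq_nonneg σ⟩).real_toNNReal) _]
  have : (fun x => (gaussianPDFReal 0 ⟨σ ^ 2, sq_nonneg σ⟩ x).toNNReal • exp (t * x))
      = fun x => exp (t ^ 2 * σ ^ 2 / 2) * gaussianPDFReal (t * σ ^ 2) ⟨σ ^ 2, sq_nonneg σ⟩ x := by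
    ext x
    rw [NNReal.smul_def, smul_eq_mul, Real.coe_toNNReal _ (gaussianPDFReal_nonneg 0 ⟨σ ^ 2, sq_nonneg σ⟩ x),
      pdf_mul_exp σ t x hσ]
  rw [this, integral_const_mul, integral_gaussianPDFReal_eq_one _ hv, mul_one]

/-! ### Poisson series -/

lemma desc_shift (lam : ℝ) (j n : ℕ) :
    (((n + j).descFactorial j : ℝ)) * (lam ^ (n + j) / (n + j).factorial)
      = lam ^ j * (lam ^ n / n.factorial) := by
  have h := Nat.factorial_mul_descFactorial (Nat.le_add_left j n)
  rw [Nat.add_sub_cancel] at h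
  have h' : ((n + j).factorial : ℝ) = n.factorial * ((n + j).descFactorial j : ℝ) := by
    rw [← Nat.cast_mul, h]
  have h1 : (n.factorial : ℝ) ≠ 0 := Nat.cast_ne_zero.mpr n.factorial_ne_zero
  have h2 : ((n + j).descFactorial j : ℝ) ≠ 0 := by
    rw [Nat.cast_ne_zero, Ne, Nat.descFactorial_eq_zero_iff_lt]
    omega
  rw [h', pow_add]
  field_simp

lemma desc_supp (lam : ℝ) (j : ℕ) :
    Function.support (fun y : ℕ => (y.descFactorial j : ℝ) * (lam ^ y / y.factorial))
      ⊆ Set.range (fun n : ℕ => n + j) := by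
  intro y hy
  by_contra h
  have hyj : y < j := by
    by_contra h2
    exact h ⟨y - j, by simp; omega⟩
  have : y.descFactorial j = 0 := Nat.descFactorial_eq_zero_iff_lt.mpr hyj
  simp [Function.mem_support, this] at hy

lemma desc_summable (lam : ℝ) (j : ℕ) :
    Summable (fun y : ℕ => (y.descFactorial j : ℝ) * (lam ^ y / y.factorial)) := by
  have hinj : Function.Injective (fun n : ℕ => n + j) := add_left_injective j
  rw [← hinj.summable_iff (Function.support_subset_iff'.mp (desc_supp lam j))]
  refine Summable.congr ((Real.summable_pow_div_factorial lam).mul_left (lam ^ j)) ?_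
  intro n
  exact (desc_shift lam j n).symm

lemma desc_tsum (lam : ℝ) (j : ℕ) :
    ∑' y : ℕ, (y.descFactorial j : ℝ) * (lam ^ y / y.factorial) = lam ^ j * exp lam := by
  have hinj : Function.Injective (fun n : ℕ => n + j) := add_left_injective j
  rw [← hinj.tsum_eq (desc_supp lam j)]
  have : ∀ n : ℕ, ((n + j).descFactorial j : ℝ) * (lam ^ (n + j) / (n + j).factorial)
      = lam ^ j * (lam ^ n / n.factorial) := desc_shift lam j
  rw [tsum_congr this, tsum_mul_left]
  congr 1
  rw [Real.exp_eq_exp_ℝ, NormedSpace.exp_eq_tsum_div]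

lemma d2_cast (y : ℕ) : ((y.descFactorial 2 : ℕ) : ℝ) = (y:ℝ)^2 - y := by
  rcases y with _ | n
  · simp
  · simp [Nat.descFactorial_succ, Nat.descFactorial_one]
    push_cast
    ring

lemma d3_cast (y : ℕ) : ((y.descFactorial 3 : ℕ) : ℝ) = (y:ℝ)^3 - 3*(y:ℝ)^2 + 2*y := by
  rcases y with _ | _ | m
  · simp
  · norm_num [Nat.descFactorial_succ, Nat.descFactorial_one]
  · simp only [Nat.descFactorial_succ, Nat.descFactorial_one, Nat.descFactorial_zero]
    have h2 : (m + 1 + 1 - 2 : ℕ) = m := by omega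
    have h1 : (m + 1 + 1 - 1 : ℕ) = m + 1 := by omega
    rw [h2, h1]
    push_cast
    ring

/-- The Poisson log-normal kernel term as a function of `s = μ + z`. -/
noncomputable def pTerm (s : ℝ) (y : ℕ) : ℝ := exp (-exp s) * exp (s * y) / y.factorial

lemma pTerm_eq (s : ℝ) (y : ℕ) :
    pTerm s y = exp (-exp s) * (exp s ^ y / y.factorial) := by
  rw [pTerm, mul_comm s (y:ℝ), Real.exp_nat_mul, mul_div_assoc]

lemma pTerm_nonneg (s : ℝ) (y : ℕ) : 0 ≤ pTerm s y := by
  rw [pTerm]; positivity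

lemma pTerm_measurable (μ : ℝ) (y : ℕ) : Measurable (fun z => pTerm (μ + z) y) := by
  simp only [pTerm]
  fun_prop

lemma summable_desc_pTerm (s : ℝ) (j : ℕ) :
    Summable (fun y : ℕ => (y.descFactorial j : ℝ) * pTerm s y) := by
  refine Summable.congr (((desc_summable (exp s) j).mul_left (exp (-exp s)))) ?_
  intro y
  rw [pTerm_eq]
  ring

lemma tsum_desc_pTerm (s : ℝ) (j : ℕ) :
    ∑' y : ℕ, (y.descFactorial j : ℝ) * pTerm s y = exp s ^ j := by
  have : ∀ y : ℕ, (y.descFactorial j : ℝ) * pTerm s y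
      = exp (-exp s) * ((y.descFactorial j : ℝ) * (exp s ^ y / y.factorial)) := by
    intro y; rw [pTerm_eq]; ring
  rw [tsum_congr this, tsum_mul_left, desc_tsum, ← mul_assoc, mul_comm (exp (-exp s)),
    mul_assoc, ← Real.exp_add]
  simp

lemma summable_pow_pTerm (s : ℝ) (k : ℕ) (hk : k ≤ 3) :
    Summable (fun y : ℕ => (y:ℝ) ^ k * pTerm s y) := by
  have h1 := summable_desc_pTerm s 1
  have h2 := summable_desc_pTerm s 2
  have h3 := summable_desc_pTerm s 3
  interval_cases k
  · simpa using summable_desc_pTerm s 0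
  · refine h1.congr fun y => ?_
    simp [Nat.descFactorial_one]
  · refine ((h2.add h1)).congr fun y => ?_
    rw [d2_cast]; simp [Nat.descFactorial_one]; ring
  · refine ((h3.add ((h2.mul_left 3).add h1))).congr fun y => ?_
    rw [d3_cast, d2_cast]; simp [Nat.descFactorial_one]; ring

lemma mom1 (s : ℝ) : ∑' y : ℕ, (y:ℝ) * pTerm s y = exp s := by
  have : ∀ y : ℕ, (y:ℝ) * pTerm s y = (y.descFactorial 1 : ℝ) * pTerm s y := by
    intro y; rw [Nat.descFactorial_one]
  rw [tsum_congr this, tsum_desc_pTerm, pow_one]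

lemma mom2 (s : ℝ) : ∑' y : ℕ, (y:ℝ)^2 * pTerm s y = exp s ^ 2 + exp s := by
  have : ∀ y : ℕ, (y:ℝ)^2 * pTerm s y
      = (y.descFactorial 2 : ℝ) * pTerm s y + (y.descFactorial 1 : ℝ) * pTerm s y := by
    intro y; rw [d2_cast, Nat.descFactorial_one]; ring
  rw [tsum_congr this, Summable.tsum_add (summable_desc_pTerm s 2) (summable_desc_pTerm s 1),
    tsum_desc_pTerm, tsum_desc_pTerm, pow_one]

lemma mom3 (s : ℝ) : ∑' y : ℕ, (y:ℝ)^3 * pTerm s y = exp s ^ 3 + 3 * exp s ^ 2 + exp s := by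
  have : ∀ y : ℕ, (y:ℝ)^3 * pTerm s y
      = (y.descFactorial 3 : ℝ) * pTerm s y
        + (3 * ((y.descFactorial 2 : ℝ) * pTerm s y) + (y.descFactorial 1 : ℝ) * pTerm s y) := by
    intro y; rw [d3_cast, d2_cast, Nat.descFactorial_one]; ring
  rw [tsum_congr this,
    Summable.tsum_add (summable_desc_pTerm s 3) (((summable_desc_pTerm s 2).mul_left 3).add
      (summable_desc_pTerm s 1)),
    Summable.tsum_add ((summable_desc_pTerm s 2).mul_left 3) (summable_desc_pTerm s 1),
    tsum_mul_left, tsum_desc_pTerm, tsum_desc_pTerm, tsum_desc_pTerm, pow_one]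
  ring

/-! ### Exchange of sum and integral -/

lemma zipln_moment (pr μ σ : ℝ) (k : ℕ) (hk1 : 1 ≤ k) (hk3 : k ≤ 3)
    (hint : Integrable (fun z => ∑' y : ℕ, (y:ℝ)^k * pTerm (μ + z) y)
      (gaussianReal 0 ⟨σ ^ 2, sq_nonneg σ⟩)) :
    ∑' y : ℕ, (y:ℝ)^k * ziplnPMF pr μ σ y
      = pr * ∫ z, (∑' y : ℕ, (y:ℝ)^k * pTerm (μ + z) y)
          ∂(gaussianReal 0 ⟨σ ^ 2, sq_nonneg σ⟩) := by
  set ν := gaussianReal 0 (⟨σ ^ 2, sq_nonneg σ⟩ : NNReal) with hν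
  have hFnn : ∀ (y : ℕ) (z : ℝ), 0 ≤ (y:ℝ)^k * pTerm (μ + z) y :=
    fun y z => mul_nonneg (by positivity) (pTerm_nonneg _ _)
  have hmeas : ∀ y : ℕ, Measurable (fun z => (y:ℝ)^k * pTerm (μ + z) y) :=
    fun y => (pTerm_measurable μ y).const_mul _
  have step1 : ∀ y : ℕ, (y:ℝ)^k * ziplnPMF pr μ σ y
      = pr * ∫ z, (y:ℝ)^k * pTerm (μ + z) y ∂ν := by
    intro y
    simp only [ziplnPMF, pTerm, integral_const_mul, ← hν]
    rcases eq_or_ne y 0 with h | h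
    · subst h
      rw [Nat.cast_zero, zero_pow (by omega : k ≠ 0)]
      ring
    · simp only [h, if_false]
      ring
  rw [tsum_congr step1, tsum_mul_left]
  congr 1
  have key : ∀ y : ℕ, ∫ z, (y:ℝ)^k * pTerm (μ + z) y ∂ν
      = (∫⁻ z, ENNReal.ofReal ((y:ℝ)^k * pTerm (μ + z) y) ∂ν).toReal := fun y =>
    integral_eq_lintegral_of_nonneg_ae (ae_of_all _ (hFnn y)) (hmeas y).aestronglyMeasurable
  have hlin : ∑' y : ℕ, ∫⁻ z, ENNReal.ofReal ((y:ℝ)^k * pTerm (μ + z) y) ∂ν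
      = ∫⁻ z, ∑' y : ℕ, ENNReal.ofReal ((y:ℝ)^k * pTerm (μ + z) y) ∂ν :=
    (lintegral_tsum fun y => ((hmeas y).ennreal_ofReal).aemeasurable).symm
  have hpt : ∀ z : ℝ, (∑' y : ℕ, ENNReal.ofReal ((y:ℝ)^k * pTerm (μ + z) y))
      = ENNReal.ofReal (∑' y : ℕ, (y:ℝ)^k * pTerm (μ + z) y) := fun z =>
    (ENNReal.ofReal_tsum_of_nonneg (fun y => hFnn y z) (summable_pow_pTerm (μ + z) k hk3)).symm
  have hin2 : ∫⁻ z, ENNReal.ofReal (∑' y : ℕ, (y:ℝ)^k * pTerm (μ + z) y) ∂ν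
      = ENNReal.ofReal (∫ z, (∑' y : ℕ, (y:ℝ)^k * pTerm (μ + z) y) ∂ν) :=
    (ofReal_integral_eq_lintegral_ofReal hint
      (ae_of_all _ fun z => tsum_nonneg fun y => hFnn y z)).symm
  have htot : ∑' y : ℕ, ∫⁻ z, ENNReal.ofReal ((y:ℝ)^k * pTerm (μ + z) y) ∂ν
      = ENNReal.ofReal (∫ z, (∑' y : ℕ, (y:ℝ)^k * pTerm (μ + z) y) ∂ν) := by
    rw [hlin, lintegral_congr hpt, hin2]
  have hfin : ∀ y : ℕ, ∫⁻ z, ENNReal.ofReal ((y:ℝ)^k * pTerm (μ + z) y) ∂ν ≠ ⊤ := by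
    intro y
    have hle := ENNReal.le_tsum (f := fun y : ℕ =>
      ∫⁻ z, ENNReal.ofReal ((y:ℝ)^k * pTerm (μ + z) y) ∂ν) y
    rw [htot] at hle
    exact ne_top_of_le_ne_top ENNReal.ofReal_ne_top hle
  calc ∑' y : ℕ, ∫ z, (y:ℝ)^k * pTerm (μ + z) y ∂ν
      = ∑' y : ℕ, (∫⁻ z, ENNReal.ofReal ((y:ℝ)^k * pTerm (μ + z) y) ∂ν).toReal :=
        tsum_congr key
    _ = (∑' y : ℕ, ∫⁻ z, ENNReal.ofReal ((y:ℝ)^k * pTerm (μ + z) y) ∂ν).toReal :=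
        (ENNReal.tsum_toReal_eq hfin).symm
    _ = (ENNReal.ofReal (∫ z, (∑' y : ℕ, (y:ℝ)^k * pTerm (μ + z) y) ∂ν)).toReal := by rw [htot]
    _ = ∫ z, (∑' y : ℕ, (y:ℝ)^k * pTerm (μ + z) y) ∂ν :=
        ENNReal.toReal_ofReal (integral_nonneg fun z => tsum_nonneg fun y => hFnn y z)

/-! ### Explicit moments -/

lemma epow_eq (μ : ℝ) (j : ℕ) :
    (fun z : ℝ => exp (μ + z) ^ j) = fun z => exp ((j:ℝ) * μ) * exp ((j:ℝ) * z) := by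
  ext z
  rw [← Real.exp_nat_mul, ← Real.exp_add, Real.exp_eq_exp]
  ring

lemma integrable_epow (μ σ : ℝ) (hσ : 0 < σ) (j : ℕ) :
    Integrable (fun z => exp (μ + z) ^ j) (gaussianReal 0 ⟨σ ^ 2, sq_nonneg σ⟩) := by
  rw [epow_eq]
  exact (integrable_exp_gaussian σ j hσ).const_mul _

lemma integral_epow (μ σ : ℝ) (hσ : 0 < σ) (j : ℕ) :
    ∫ z, exp (μ + z) ^ j ∂(gaussianReal 0 ⟨σ ^ 2, sq_nonneg σ⟩)
      = exp ((j:ℝ) * μ + (j:ℝ)^2 * σ^2/2) := by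
  rw [epow_eq]
  rw [integral_const_mul, integral_exp_gaussian σ j hσ, ← Real.exp_add]

lemma T1 (pr μ σ : ℝ) (hσ : 0 < σ) :
    ∑' y : ℕ, (y:ℝ) * ziplnPMF pr μ σ y = pr * exp (μ + σ^2/2) := by
  have hc : ∀ y : ℕ, (y:ℝ) * ziplnPMF pr μ σ y = (y:ℝ)^1 * ziplnPMF pr μ σ y := by
    intro y; rw [pow_one]
  have hint : Integrable (fun z => ∑' y : ℕ, (y:ℝ)^1 * pTerm (μ + z) y)
      (gaussianReal 0 ⟨σ ^ 2, sq_nonneg σ⟩) := by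
    refine ((integrable_epow μ σ hσ 1)).congr (ae_of_all _ fun z => ?_)
    simp only [pow_one]
    exact (mom1 (μ + z)).symm
  rw [tsum_congr hc, zipln_moment pr μ σ 1 le_rfl (by norm_num) hint]
  congr 1
  have : (fun z : ℝ => ∑' y : ℕ, (y:ℝ)^1 * pTerm (μ + z) y)
      = fun z => exp (μ + z) ^ 1 := by
    ext z
    simp only [pow_one]
    exact mom1 (μ + z)
  rw [this, integral_epow μ σ hσ 1]
  norm_num

lemma T2 (pr μ σ : ℝ) (hσ : 0 < σ) :
    ∑' y : ℕ, (y:ℝ)^2 * ziplnPMF pr μ σ y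
      = pr * (exp (2*μ + 2*σ^2) + exp (μ + σ^2/2)) := by
  have hint : Integrable (fun z => ∑' y : ℕ, (y:ℝ)^2 * pTerm (μ + z) y)
      (gaussianReal 0 ⟨σ ^ 2, sq_nonneg σ⟩) := by
    refine (((integrable_epow μ σ hσ 2).add (integrable_epow μ σ hσ 1))).congr
      (ae_of_all _ fun z => ?_)
    simp only [pow_one]
    exact (mom2 (μ + z)).symm
  rw [zipln_moment pr μ σ 2 (by norm_num) (by norm_num) hint]
  congr 1
  have : (fun z : ℝ => ∑' y : ℕ, (y:ℝ)^2 * pTerm (μ + z) y)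
      = fun z => exp (μ + z) ^ 2 + exp (μ + z) ^ 1 := by
    ext z
    simp only [pow_one]
    exact mom2 (μ + z)
  rw [this, integral_add (integrable_epow μ σ hσ 2) (integrable_epow μ σ hσ 1),
    integral_epow μ σ hσ 2, integral_epow μ σ hσ 1]
  norm_num
  congr 2
  ring

lemma T3 (pr μ σ : ℝ) (hσ : 0 < σ) :
    ∑' y : ℕ, (y:ℝ)^3 * ziplnPMF pr μ σ y
      = pr * (exp (3*μ + 9*σ^2/2) + 3 * exp (2*μ + 2*σ^2) + exp (μ + σ^2/2)) := by
  have hint : Integrable (fun z => ∑' y : ℕ, (y:ℝ)^3 * pTerm (μ + z) y)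
      (gaussianReal 0 ⟨σ ^ 2, sq_nonneg σ⟩) := by
    refine (((integrable_epow μ σ hσ 3).add
      (((integrable_epow μ σ hσ 2).const_mul 3).add (integrable_epow μ σ hσ 1)))).congr
      (ae_of_all _ fun z => ?_)
    simp only [pow_one]
    rw [← add_assoc]
    exact (mom3 (μ + z)).symm
  rw [zipln_moment pr μ σ 3 (by norm_num) le_rfl hint]
  congr 1
  have : (fun z : ℝ => ∑' y : ℕ, (y:ℝ)^3 * pTerm (μ + z) y)
      = fun z => exp (μ + z) ^ 3 + (3 * exp (μ + z) ^ 2 + exp (μ + z) ^ 1) := by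
    ext z
    simp only [pow_one]
    rw [← add_assoc]
    exact mom3 (μ + z)
  have h23 : Integrable (fun z : ℝ => 3 * exp (μ + z)^2 + exp (μ + z)^1)
      (gaussianReal 0 ⟨σ ^ 2, sq_nonneg σ⟩) :=
    ((integrable_epow μ σ hσ 2).const_mul 3).add (integrable_epow μ σ hσ 1)
  rw [this, integral_add (integrable_epow μ σ hσ 3) h23]
  rw [integral_add ((integrable_epow μ σ hσ 2).const_mul 3) (integrable_epow μ σ hσ 1),
    integral_const_mul, integral_epow μ σ hσ 3, integral_epow μ σ hσ 2, integral_epow μ σ hσ 1]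
  norm_num
  rw [← add_assoc]
  congr 3 <;> ring

/-- The parameters of the univariate zero-inflated Poisson log-normal distribution are
identified by its first three moments: if two ZIPLN distributions share the same first,
second and third moments, then their parameters coincide. -/
theorem zipln_identifiable (pr pr' μ μ' σ σ' : ℝ)
    (hpr : pr ∈ Set.Ioc (0 : ℝ) 1) (hpr' : pr' ∈ Set.Ioc (0 : ℝ) 1)
    (hσ : 0 < σ) (hσ' : 0 < σ')
    (h₁ : ∑' y : ℕ, (y : ℝ) * ziplnPMF pr μ σ y
        = ∑' y : ℕ, (y : ℝ) * ziplnPMF pr' μ' σ' y)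
    (h₂ : ∑' y : ℕ, (y : ℝ) ^ 2 * ziplnPMF pr μ σ y
        = ∑' y : ℕ, (y : ℝ) ^ 2 * ziplnPMF pr' μ' σ' y)
    (h₃ : ∑' y : ℕ, (y : ℝ) ^ 3 * ziplnPMF pr μ σ y
        = ∑' y : ℕ, (y : ℝ) ^ 3 * ziplnPMF pr' μ' σ' y) :
    pr = pr' ∧ μ = μ' ∧ σ = σ' := by
  rw [T1 pr μ σ hσ, T1 pr' μ' σ' hσ'] at h₁
  rw [T2 pr μ σ hσ, T2 pr' μ' σ' hσ'] at h₂
  rw [T3 pr μ σ hσ, T3 pr' μ' σ' hσ'] at h₃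
  obtain ⟨hp0, hp1⟩ := hpr
  obtain ⟨hp0', hp1'⟩ := hpr'
  have e2 : pr * exp (2*μ + 2*σ^2) = pr' * exp (2*μ' + 2*σ'^2) := by
    linear_combination h₂ - h₁
  have e3 : pr * exp (3*μ + 9*σ^2/2) = pr' * exp (3*μ' + 9*σ'^2/2) := by
    linear_combination h₃ - 3 * e2 - h₁
  have c1 : exp (2*μ + 2*σ^2) * exp (μ' + σ'^2/2)
      = exp (μ + σ^2/2) * exp (2*μ' + 2*σ'^2) := by
    have hpc : pr * (exp (2*μ + 2*σ^2) * exp (μ' + σ'^2/2))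
        = pr * (exp (μ + σ^2/2) * exp (2*μ' + 2*σ'^2)) := by
      linear_combination exp (μ' + σ'^2/2) * e2 - exp (2*μ' + 2*σ'^2) * h₁
    exact mul_left_cancel₀ (ne_of_gt hp0) hpc
  have c2 : exp (3*μ + 9*σ^2/2) * exp (2*μ' + 2*σ'^2)
      = exp (2*μ + 2*σ^2) * exp (3*μ' + 9*σ'^2/2) := by
    have hpc : pr * (exp (3*μ + 9*σ^2/2) * exp (2*μ' + 2*σ'^2))
        = pr * (exp (2*μ + 2*σ^2) * exp (3*μ' + 9*σ'^2/2)) := by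
      linear_combination exp (2*μ' + 2*σ'^2) * e3 - exp (3*μ' + 9*σ'^2/2) * e2
    exact mul_left_cancel₀ (ne_of_gt hp0) hpc
  rw [← Real.exp_add, ← Real.exp_add, Real.exp_eq_exp] at c1 c2
  have hsq : σ^2 = σ'^2 := by linarith
  have hμ : μ = μ' := by linarith
  have hσσ : σ = σ' := by
    have habs : |σ| = |σ'| := by
      rw [← Real.sqrt_sq_eq_abs, ← Real.sqrt_sq_eq_abs, hsq]
    rwa [abs_of_pos hσ, abs_of_pos hσ'] at habs
  refine ⟨?_, hμ, hσσ⟩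
  rw [hμ, hσσ] at h₁
  exact mul_right_cancel₀ (ne_of_gt (Real.exp_pos _)) h₁
end

section
/- Let (Y₁, Y₂) follow the bivariate zero-inflated Poisson log-normal model with parameters (π₁, π₂, μ₁, μ₂, c₁, c₂). Then the latent covariance parameter σ₁₂ = c₁·c₂ is recovered from the moments of (Y₁, Y₂) by σ₁₂ = log(Cov(Y₁, Y₂)/(E[Y₁]·E[Y₂]) + 1). -/
open MeasureTheory ProbabilityTheory Real

open scoped ENNReal NNReal

namespace BZAux

noncomputable def pois (r : ℝ) (n : ℕ) : ℝ := exp (-r) * r ^ n / n.factorial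

lemma hasSum_pow_div_factorial (r : ℝ) :
    HasSum (fun n : ℕ => r ^ n / n.factorial) (exp r) := by
  rw [Real.exp_eq_exp_ℝ]
  exact NormedSpace.expSeries_div_hasSum_exp r

lemma hasSum_pois (r : ℝ) : HasSum (pois r) 1 := by
  have h := (hasSum_pow_div_factorial r).mul_left (exp (-r))
  rw [← Real.exp_add, neg_add_cancel, Real.exp_zero] at h
  exact h.congr_fun (fun n => by rw [pois, mul_div_assoc])

lemma hasSum_mul_pois (r : ℝ) : HasSum (fun n : ℕ => (n : ℝ) * pois r n) r := by
  have h := ((hasSum_pow_div_factorial r).mul_left (exp (-r) * r))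
  have hval : exp (-r) * r * exp r = r := by
    rw [mul_comm (exp (-r)) r, mul_assoc, ← Real.exp_add, neg_add_cancel, Real.exp_zero,
      mul_one]
  rw [hval] at h
  have h2 : HasSum (fun n : ℕ => ((n + 1 : ℕ) : ℝ) * pois r (n + 1)) r := by
    refine h.congr_fun (fun n => ?_)
    rw [pois, Nat.factorial_succ]
    have hne : ((n.factorial : ℝ)) ≠ 0 := Nat.cast_ne_zero.mpr n.factorial_ne_zero
    push_cast
    field_simp
    ring
  have h3 := (hasSum_nat_add_iff (f := fun n : ℕ => (n : ℝ) * pois r n) 1).mp h2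
  simpa [pois] using h3

/-- One factor of the bizipln pmf integrand. -/
noncomputable def fj (pr m : ℝ) (y : ℕ) : ℝ :=
  (1 - pr) * (if y = 0 then 1 else 0) +
    pr * (exp (-exp m) * exp (m * y) / y.factorial)

lemma fj_eq (pr m : ℝ) (y : ℕ) :
    fj pr m y = (if y = 0 then (1 - pr) else 0) + pr * pois (exp m) y := by
  rw [fj, pois, mul_ite, mul_one, mul_zero]
  congr 3
  rw [mul_comm m (y : ℝ), Real.exp_nat_mul]

lemma pois_nonneg {r : ℝ} (hr : 0 ≤ r) (y : ℕ) : 0 ≤ pois r y := by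
  rw [pois]; positivity

lemma pois_le_one {r : ℝ} (hr : 0 ≤ r) (y : ℕ) : pois r y ≤ 1 := by
  rw [pois, div_le_one (by positivity)]
  calc exp (-r) * r ^ y ≤ exp (-r) * (exp r * y.factorial) := by
        refine mul_le_mul_of_nonneg_left ?_ (exp_nonneg _)
        have h1 : r ^ y / y.factorial ≤ exp r :=
          le_hasSum (hasSum_pow_div_factorial r) y (fun j _ => by positivity)
        rw [div_le_iff₀ (by positivity)] at h1
        exact h1
    _ = y.factorial * (exp (-r) * exp r) := by ring
    _ = y.factorial := by rw [← Real.exp_add, neg_add_cancel, Real.exp_zero, mul_one]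

lemma fj_nonneg {pr : ℝ} (hpr : pr ∈ Set.Ioc (0:ℝ) 1) (m : ℝ) (y : ℕ) : 0 ≤ fj pr m y := by
  rw [fj_eq]
  have h1 : (0:ℝ) ≤ if y = 0 then (1 - pr) else 0 := by
    split
    · linarith [hpr.2]
    · exact le_refl 0
  exact add_nonneg h1 (mul_nonneg hpr.1.le (pois_nonneg (exp_nonneg m) y))

lemma fj_le_one {pr : ℝ} (hpr : pr ∈ Set.Ioc (0:ℝ) 1) (m : ℝ) (y : ℕ) : fj pr m y ≤ 1 := by
  rw [fj_eq]
  have h1 : (if y = 0 then (1 - pr) else 0) ≤ 1 - pr := by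
    split <;> linarith [hpr.2]
  have h2 : pr * pois (exp m) y ≤ pr * 1 :=
    mul_le_mul_of_nonneg_left (pois_le_one (exp_nonneg m) y) hpr.1.le
  linarith

lemma hasSum_fj (pr m : ℝ) : HasSum (fj pr m) 1 := by
  have h := (hasSum_ite_eq (0:ℕ) (1 - pr)).add ((hasSum_pois (exp m)).mul_left pr)
  rw [mul_one, sub_add_cancel] at h
  exact h.congr_fun (fun y => fj_eq pr m y)

lemma hasSum_mul_fj (pr m : ℝ) :
    HasSum (fun y : ℕ => (y : ℝ) * fj pr m y) (pr * exp m) := by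
  have h := (hasSum_mul_pois (exp m)).mul_left pr
  refine h.congr_fun (fun y => ?_)
  rw [fj_eq, mul_add]
  rcases Nat.eq_zero_or_pos y with hy | hy
  · subst hy; simp
  · rw [if_neg hy.ne', mul_zero, zero_add]; ring

lemma tsum_ofReal_fj {pr : ℝ} (hpr : pr ∈ Set.Ioc (0:ℝ) 1) (m : ℝ) :
    ∑' y : ℕ, ENNReal.ofReal (fj pr m y) = 1 := by
  rw [← ENNReal.ofReal_tsum_of_nonneg (fj_nonneg hpr m) (hasSum_fj pr m).summable,
    (hasSum_fj pr m).tsum_eq, ENNReal.ofReal_one]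

lemma tsum_mul_ofReal_fj {pr : ℝ} (hpr : pr ∈ Set.Ioc (0:ℝ) 1) (m : ℝ) :
    ∑' y : ℕ, (y : ℝ≥0∞) * ENNReal.ofReal (fj pr m y) = ENNReal.ofReal (pr * exp m) := by
  have h : ∀ y : ℕ, (y : ℝ≥0∞) * ENNReal.ofReal (fj pr m y)
      = ENNReal.ofReal ((y : ℝ) * fj pr m y) := by
    intro y
    rw [ENNReal.ofReal_mul (Nat.cast_nonneg y), ENNReal.ofReal_natCast]
  simp_rw [h]
  rw [← ENNReal.ofReal_tsum_of_nonneg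
      (fun y => mul_nonneg (Nat.cast_nonneg y) (fj_nonneg hpr m y))
      (hasSum_mul_fj pr m).summable,
    (hasSum_mul_fj pr m).tsum_eq]

/-- unified: ε ∈ {0, 1} -/
lemma tsum_pow_mul_ofReal_fj {pr : ℝ} (hpr : pr ∈ Set.Ioc (0:ℝ) 1) (m : ℝ) {ε : ℕ}
    (hε : ε ≤ 1) :
    ∑' y : ℕ, (y : ℝ≥0∞) ^ ε * ENNReal.ofReal (fj pr m y)
      = ENNReal.ofReal (pr ^ ε * exp (ε * m)) := by
  interval_cases ε
  · simpa using tsum_ofReal_fj hpr m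
  · simpa using tsum_mul_ofReal_fj hpr m

lemma pdf_mul_exp (t x : ℝ) :
    gaussianPDFReal 0 1 x * exp (t * x) = exp (t ^ 2 / 2) * gaussianPDFReal t 1 x := by
  rw [gaussianPDFReal, gaussianPDFReal]
  push_cast
  conv_rhs => rw [mul_left_comm, ← Real.exp_add]
  rw [mul_assoc, ← Real.exp_add]
  congr 1
  ring

lemma integrable_exp_gaussian (t : ℝ) :
    Integrable (fun x => exp (t * x)) (gaussianReal 0 1) := by
  rw [gaussianReal_of_var_ne_zero 0 one_ne_zero]
  have hmeas : Measurable fun x => (gaussianPDFReal 0 1 x).toNNReal :=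
    (measurable_gaussianPDFReal 0 1).real_toNNReal
  rw [show gaussianPDF 0 1 = fun x => ((gaussianPDFReal 0 1 x).toNNReal : ℝ≥0∞) from rfl,
    integrable_withDensity_iff_integrable_smul hmeas]
  have heq : (fun x => (gaussianPDFReal 0 1 x).toNNReal • exp (t * x))
      = fun x => exp (t ^ 2 / 2) * gaussianPDFReal t 1 x := by
    funext x
    rw [NNReal.smul_def, Real.coe_toNNReal _ (gaussianPDFReal_nonneg 0 1 x), smul_eq_mul,
      pdf_mul_exp]
  rw [heq]
  exact (integrable_gaussianPDFReal t 1).const_mul _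

lemma integral_exp_gaussian (t : ℝ) :
    ∫ x, exp (t * x) ∂(gaussianReal 0 1) = exp (t ^ 2 / 2) := by
  rw [gaussianReal_of_var_ne_zero 0 one_ne_zero]
  have hmeas : Measurable fun x => (gaussianPDFReal 0 1 x).toNNReal :=
    (measurable_gaussianPDFReal 0 1).real_toNNReal
  rw [show gaussianPDF 0 1 = fun x => ((gaussianPDFReal 0 1 x).toNNReal : ℝ≥0∞) from rfl,
    integral_withDensity_eq_integral_smul hmeas]
  have heq : (fun x => (gaussianPDFReal 0 1 x).toNNReal • exp (t * x))
      = fun x => exp (t ^ 2 / 2) * gaussianPDFReal t 1 x := by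
    funext x
    rw [NNReal.smul_def, Real.coe_toNNReal _ (gaussianPDFReal_nonneg 0 1 x), smul_eq_mul,
      pdf_mul_exp]
  rw [heq, integral_const_mul, integral_gaussianPDFReal_eq_one t one_ne_zero, mul_one]

lemma lintegral_exp_pi {q : ℕ} (t : Fin q → ℝ) :
    ∫⁻ w : Fin q → ℝ, ENNReal.ofReal (exp (∑ i, t i * w i))
        ∂(Measure.pi fun _ : Fin q => gaussianReal 0 1)
      = ENNReal.ofReal (exp (∑ i, (t i) ^ 2 / 2)) := by
  letI : MeasureSpace ℝ := ⟨gaussianReal 0 1⟩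
  haveI : SigmaFinite (volume : Measure ℝ) := by
    change SigmaFinite (gaussianReal 0 1); infer_instance
  have hvol : (volume : Measure (Fin q → ℝ)) = Measure.pi fun _ : Fin q => gaussianReal 0 1 :=
    rfl
  have hint : Integrable (fun w : Fin q → ℝ => ∏ i, exp (t i * w i)) :=
    Integrable.fintype_prod (𝕜 := ℝ) (f := fun i x => exp (t i * x))
      (fun i => integrable_exp_gaussian (t i))
  have hint2 : Integrable (fun w : Fin q → ℝ => exp (∑ i, t i * w i)) := by
    refine hint.congr (ae_of_all _ (fun w => ?_))
    show ∏ i, exp (t i * w i) = exp (∑ i, t i * w i)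
    rw [Real.exp_sum]
  rw [← hvol, ← ofReal_integral_eq_lintegral_ofReal hint2
    (ae_of_all _ (fun w => exp_nonneg _))]
  congr 1
  have : ∫ w : Fin q → ℝ, exp (∑ i, t i * w i) = ∫ w : Fin q → ℝ, ∏ i, exp (t i * w i) := by
    congr 1; funext w; rw [Real.exp_sum]
  rw [this, hvol, integral_fintype_prod_eq_prod (f := fun (i : Fin q) (x : ℝ) => exp (t i * x))]
  rw [Real.exp_sum]
  exact Finset.prod_congr rfl (fun i _ => integral_exp_gaussian (t i))

lemma measurable_fj_comp {q : ℕ} (pr μ : ℝ) (c : Fin q → ℝ) (y : ℕ) :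
    Measurable fun w : Fin q → ℝ => fj pr (μ + ∑ i, c i * w i) y := by
  unfold fj
  fun_prop

end BZAux

namespace BZAux

lemma moment {q : ℕ} (c₁ c₂ : Fin q → ℝ) (pr₁ pr₂ μ₁ μ₂ : ℝ)
    (hpr₁ : pr₁ ∈ Set.Ioc (0:ℝ) 1) (hpr₂ : pr₂ ∈ Set.Ioc (0:ℝ) 1)
    (ε₁ ε₂ : ℕ) (hε₁ : ε₁ ≤ 1) (hε₂ : ε₂ ≤ 1) :
    ∑' y : ℕ × ℕ, (y.1 : ℝ) ^ ε₁ * (y.2 : ℝ) ^ ε₂ * biziplnPMF c₁ c₂ pr₁ pr₂ μ₁ μ₂ y.1 y.2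
      = pr₁ ^ ε₁ * pr₂ ^ ε₂ *
        exp ((ε₁ : ℝ) * μ₁ + (ε₂ : ℝ) * μ₂
          + ∑ i, ((ε₁ : ℝ) * c₁ i + (ε₂ : ℝ) * c₂ i) ^ 2 / 2) := by
  set ν : Measure (Fin q → ℝ) := Measure.pi fun _ : Fin q => gaussianReal 0 1 with hν
  haveI : IsProbabilityMeasure ν := by rw [hν]; infer_instance
  set m₁ : (Fin q → ℝ) → ℝ := fun w => μ₁ + ∑ i, c₁ i * w i with hm₁
  set m₂ : (Fin q → ℝ) → ℝ := fun w => μ₂ + ∑ i, c₂ i * w i with hm₂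
  set F₁ : ℕ → (Fin q → ℝ) → ℝ≥0∞ := fun y w => ENNReal.ofReal (fj pr₁ (m₁ w) y) with hF₁
  set F₂ : ℕ → (Fin q → ℝ) → ℝ≥0∞ := fun y w => ENNReal.ofReal (fj pr₂ (m₂ w) y) with hF₂
  have hmf₁ : ∀ y, Measurable (fun w => F₁ y w) :=
    fun y => (measurable_fj_comp pr₁ μ₁ c₁ y).ennreal_ofReal
  have hmf₂ : ∀ y, Measurable (fun w => F₂ y w) :=
    fun y => (measurable_fj_comp pr₂ μ₂ c₂ y).ennreal_ofReal
  -- the pmf as a lower integral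
  have hpmf : ∀ y₁ y₂ : ℕ, biziplnPMF c₁ c₂ pr₁ pr₂ μ₁ μ₂ y₁ y₂
      = (∫⁻ w, F₁ y₁ w * F₂ y₂ w ∂ν).toReal := by
    intro y₁ y₂
    have h1 : biziplnPMF c₁ c₂ pr₁ pr₂ μ₁ μ₂ y₁ y₂
        = ∫ w, fj pr₁ (m₁ w) y₁ * fj pr₂ (m₂ w) y₂ ∂ν := rfl
    rw [h1, integral_eq_lintegral_of_nonneg_ae
      (ae_of_all _ fun w => mul_nonneg (fj_nonneg hpr₁ _ _) (fj_nonneg hpr₂ _ _))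
      (((measurable_fj_comp pr₁ μ₁ c₁ y₁).mul
        (measurable_fj_comp pr₂ μ₂ c₂ y₂)).aestronglyMeasurable)]
    congr 1
    exact lintegral_congr fun w => ENNReal.ofReal_mul (fj_nonneg hpr₁ _ _)
  have hL_le : ∀ y₁ y₂ : ℕ, (∫⁻ w, F₁ y₁ w * F₂ y₂ w ∂ν) ≤ 1 := by
    intro y₁ y₂
    calc ∫⁻ w, F₁ y₁ w * F₂ y₂ w ∂ν ≤ ∫⁻ _, 1 ∂ν := by
          refine lintegral_mono fun w => ?_
          have h1 : F₁ y₁ w ≤ 1 := ENNReal.ofReal_le_one.mpr (fj_le_one hpr₁ _ _)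
          have h2 : F₂ y₂ w ≤ 1 := ENNReal.ofReal_le_one.mpr (fj_le_one hpr₂ _ _)
          simpa using mul_le_mul' h1 h2
      _ = 1 := by simp
  have hL_ne : ∀ y₁ y₂ : ℕ, (∫⁻ w, F₁ y₁ w * F₂ y₂ w ∂ν) ≠ ⊤ :=
    fun y₁ y₂ => ((hL_le y₁ y₂).trans_lt ENNReal.one_lt_top).ne
  have hfin : ∀ y : ℕ × ℕ,
      ((y.1 : ℝ≥0∞) ^ ε₁ * (y.2 : ℝ≥0∞) ^ ε₂ * ∫⁻ w, F₁ y.1 w * F₂ y.2 w ∂ν) ≠ ⊤ :=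
    fun y => ENNReal.mul_ne_top
      (ENNReal.mul_ne_top (ENNReal.pow_ne_top (ENNReal.natCast_ne_top _))
        (ENNReal.pow_ne_top (ENNReal.natCast_ne_top _))) (hL_ne y.1 y.2)
  have hTS : ∑' y : ℕ × ℕ, (y.1 : ℝ) ^ ε₁ * (y.2 : ℝ) ^ ε₂
        * biziplnPMF c₁ c₂ pr₁ pr₂ μ₁ μ₂ y.1 y.2
      = (∑' y : ℕ × ℕ, (y.1 : ℝ≥0∞) ^ ε₁ * (y.2 : ℝ≥0∞) ^ ε₂
          * ∫⁻ w, F₁ y.1 w * F₂ y.2 w ∂ν).toReal := by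
    refine Eq.trans (tsum_congr fun y => ?_) (ENNReal.tsum_toReal_eq hfin).symm
    rw [hpmf y.1 y.2, ENNReal.toReal_mul, ENNReal.toReal_mul, ENNReal.toReal_pow,
      ENNReal.toReal_pow, ENNReal.toReal_natCast, ENNReal.toReal_natCast]
  rw [hTS]
  -- compute the ENNReal tsum
  have hsum : ∀ w : Fin q → ℝ, (ε₁ : ℝ) * (∑ i, c₁ i * w i) + (ε₂ : ℝ) * ∑ i, c₂ i * w i
      = ∑ i, ((ε₁ : ℝ) * c₁ i + (ε₂ : ℝ) * c₂ i) * w i := by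
    intro w
    rw [Finset.mul_sum, Finset.mul_sum, ← Finset.sum_add_distrib]
    exact Finset.sum_congr rfl fun i _ => by ring
  have hEN : ∑' y : ℕ × ℕ, (y.1 : ℝ≥0∞) ^ ε₁ * (y.2 : ℝ≥0∞) ^ ε₂
        * ∫⁻ w, F₁ y.1 w * F₂ y.2 w ∂ν
      = ENNReal.ofReal (pr₁ ^ ε₁ * pr₂ ^ ε₂ * exp ((ε₁ : ℝ) * μ₁ + (ε₂ : ℝ) * μ₂))
        * ENNReal.ofReal (exp (∑ i, ((ε₁ : ℝ) * c₁ i + (ε₂ : ℝ) * c₂ i) ^ 2 / 2)) := by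
    have h1 : ∀ a b : ℕ, (a : ℝ≥0∞) ^ ε₁ * (b : ℝ≥0∞) ^ ε₂ * ∫⁻ w, F₁ a w * F₂ b w ∂ν
        = ∫⁻ w, ((a : ℝ≥0∞) ^ ε₁ * F₁ a w) * ((b : ℝ≥0∞) ^ ε₂ * F₂ b w) ∂ν := by
      intro a b
      rw [← lintegral_const_mul' _ _ (ENNReal.mul_ne_top
        (ENNReal.pow_ne_top (ENNReal.natCast_ne_top _))
        (ENNReal.pow_ne_top (ENNReal.natCast_ne_top _)))]
      exact lintegral_congr fun w => by ring
    rw [ENNReal.tsum_prod']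
    calc ∑' (a : ℕ) (b : ℕ), (a : ℝ≥0∞) ^ ε₁ * (b : ℝ≥0∞) ^ ε₂ * ∫⁻ w, F₁ a w * F₂ b w ∂ν
        = ∑' (a : ℕ) (b : ℕ),
            ∫⁻ w, ((a : ℝ≥0∞) ^ ε₁ * F₁ a w) * ((b : ℝ≥0∞) ^ ε₂ * F₂ b w) ∂ν := by
          exact tsum_congr fun a => tsum_congr fun b => h1 a b
      _ = ∑' (a : ℕ), ∫⁻ w, ∑' (b : ℕ),
            ((a : ℝ≥0∞) ^ ε₁ * F₁ a w) * ((b : ℝ≥0∞) ^ ε₂ * F₂ b w) ∂ν := by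
          refine tsum_congr fun a => ?_
          exact (lintegral_tsum fun b => (((hmf₁ a).const_mul _).mul
            ((hmf₂ b).const_mul _)).aemeasurable).symm
      _ = ∫⁻ w, ∑' (a : ℕ) (b : ℕ),
            ((a : ℝ≥0∞) ^ ε₁ * F₁ a w) * ((b : ℝ≥0∞) ^ ε₂ * F₂ b w) ∂ν := by
          exact (lintegral_tsum fun a => (Measurable.ennreal_tsum fun b =>
            (((hmf₁ a).const_mul _).mul ((hmf₂ b).const_mul _))).aemeasurable).symm
      _ = ∫⁻ w, (∑' a : ℕ, (a : ℝ≥0∞) ^ ε₁ * F₁ a w)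
            * (∑' b : ℕ, (b : ℝ≥0∞) ^ ε₂ * F₂ b w) ∂ν := by
          refine lintegral_congr fun w => ?_
          simp_rw [ENNReal.tsum_mul_left, ENNReal.tsum_mul_right]
      _ = ∫⁻ w, ENNReal.ofReal (pr₁ ^ ε₁ * pr₂ ^ ε₂ * exp ((ε₁ : ℝ) * μ₁ + (ε₂ : ℝ) * μ₂))
            * ENNReal.ofReal (exp (∑ i, ((ε₁ : ℝ) * c₁ i + (ε₂ : ℝ) * c₂ i) * w i)) ∂ν := by
          refine lintegral_congr fun w => ?_
          rw [tsum_pow_mul_ofReal_fj hpr₁ _ hε₁, tsum_pow_mul_ofReal_fj hpr₂ _ hε₂,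
            ← ENNReal.ofReal_mul (mul_nonneg (pow_nonneg hpr₁.1.le _) (exp_nonneg _)),
            ← ENNReal.ofReal_mul (mul_nonneg (mul_nonneg (pow_nonneg hpr₁.1.le _)
              (pow_nonneg hpr₂.1.le _)) (exp_nonneg _))]
          congr 1
          rw [← hsum w]
          simp only [hm₁, hm₂]
          rw [mul_mul_mul_comm, ← Real.exp_add]
          conv_rhs => rw [mul_assoc, ← Real.exp_add]
          congr 1
          ring
      _ = ENNReal.ofReal (pr₁ ^ ε₁ * pr₂ ^ ε₂ * exp ((ε₁ : ℝ) * μ₁ + (ε₂ : ℝ) * μ₂))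
            * ENNReal.ofReal (exp (∑ i, ((ε₁ : ℝ) * c₁ i + (ε₂ : ℝ) * c₂ i) ^ 2 / 2)) := by
          rw [lintegral_const_mul' _ _ ENNReal.ofReal_ne_top, hν,
            lintegral_exp_pi fun i => (ε₁ : ℝ) * c₁ i + (ε₂ : ℝ) * c₂ i]
  rw [hEN, ← ENNReal.ofReal_mul (mul_nonneg (mul_nonneg (pow_nonneg hpr₁.1.le _)
      (pow_nonneg hpr₂.1.le _)) (exp_nonneg _)),
    ENNReal.toReal_ofReal (mul_nonneg (mul_nonneg (mul_nonneg (pow_nonneg hpr₁.1.le _)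
      (pow_nonneg hpr₂.1.le _)) (exp_nonneg _)) (exp_nonneg _))]
  rw [mul_assoc, ← Real.exp_add]

end BZAux

/-- In the bivariate zero-inflated Poisson log-normal model, the latent covariance
parameter `σ₁₂ = c₁·c₂` is recovered from the moments of (Y₁, Y₂) by
`σ₁₂ = log(Cov(Y₁, Y₂)/(E[Y₁]·E[Y₂]) + 1)`. -/
theorem bizipln_sigma12_recovery {q : ℕ} (hq : 1 ≤ q) (c₁ c₂ : Fin q → ℝ)
    (pr₁ pr₂ μ₁ μ₂ : ℝ)
    (hpr₁ : pr₁ ∈ Set.Ioc (0 : ℝ) 1) (hpr₂ : pr₂ ∈ Set.Ioc (0 : ℝ) 1)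
    (E₁ E₂ cov : ℝ)
    (hE₁ : E₁ = ∑' y : ℕ × ℕ, (y.1 : ℝ) * biziplnPMF c₁ c₂ pr₁ pr₂ μ₁ μ₂ y.1 y.2)
    (hE₂ : E₂ = ∑' y : ℕ × ℕ, (y.2 : ℝ) * biziplnPMF c₁ c₂ pr₁ pr₂ μ₁ μ₂ y.1 y.2)
    (hcov : cov = (∑' y : ℕ × ℕ,
        (y.1 : ℝ) * (y.2 : ℝ) * biziplnPMF c₁ c₂ pr₁ pr₂ μ₁ μ₂ y.1 y.2) - E₁ * E₂) :
    ∑ i, c₁ i * c₂ i = Real.log (cov / (E₁ * E₂) + 1) := by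
  have h10 : E₁ = pr₁ * exp (μ₁ + ∑ i, c₁ i ^ 2 / 2) := by
    rw [hE₁]
    have h := BZAux.moment c₁ c₂ pr₁ pr₂ μ₁ μ₂ hpr₁ hpr₂ 1 0 le_rfl (by norm_num)
    simpa using h
  have h01 : E₂ = pr₂ * exp (μ₂ + ∑ i, c₂ i ^ 2 / 2) := by
    rw [hE₂]
    have h := BZAux.moment c₁ c₂ pr₁ pr₂ μ₁ μ₂ hpr₁ hpr₂ 0 1 (by norm_num) le_rfl
    simpa using h
  have h11 : (∑' y : ℕ × ℕ, (y.1 : ℝ) * (y.2 : ℝ) * biziplnPMF c₁ c₂ pr₁ pr₂ μ₁ μ₂ y.1 y.2)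
      = pr₁ * pr₂ * exp (μ₁ + μ₂ + ∑ i, (c₁ i + c₂ i) ^ 2 / 2) := by
    have h := BZAux.moment c₁ c₂ pr₁ pr₂ μ₁ μ₂ hpr₁ hpr₂ 1 1 le_rfl le_rfl
    simpa using h
  have hE₁pos : 0 < E₁ := h10 ▸ mul_pos hpr₁.1 (exp_pos _)
  have hE₂pos : 0 < E₂ := h01 ▸ mul_pos hpr₂.1 (exp_pos _)
  have hEE : E₁ * E₂ ≠ 0 := (mul_pos hE₁pos hE₂pos).ne'
  have hB : ∑ i, (c₁ i + c₂ i) ^ 2 / 2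
      = ∑ i, c₁ i * c₂ i + ((μ₁ + ∑ i, c₁ i ^ 2 / 2) + (μ₂ + ∑ i, c₂ i ^ 2 / 2)) - μ₁ - μ₂ := by
    have : ∑ i, ((c₁ i + c₂ i) ^ 2 / 2) = ∑ i, (c₁ i * c₂ i + (c₁ i ^ 2 / 2 + c₂ i ^ 2 / 2)) :=
      Finset.sum_congr rfl fun i _ => by ring
    rw [this, Finset.sum_add_distrib, Finset.sum_add_distrib]
    ring
  have key : cov / (E₁ * E₂) + 1 = exp (∑ i, c₁ i * c₂ i) := by
    rw [hcov, sub_div, div_self hEE, sub_add_cancel, h11]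
    have harg : μ₁ + μ₂ + ∑ i, (c₁ i + c₂ i) ^ 2 / 2
        = ∑ i, c₁ i * c₂ i + ((μ₁ + ∑ i, c₁ i ^ 2 / 2) + (μ₂ + ∑ i, c₂ i ^ 2 / 2)) := by
      rw [hB]; ring
    rw [harg, Real.exp_add, Real.exp_add, div_eq_iff hEE, h10, h01]
    ring
  rw [key, Real.log_exp]
end

section
/- Uniqueness of low-rank positive semidefinite completion from overlapping principal blocks: let p, q, r be positive integers, let Σ and Σ′ be real p×p positive semidefinite matrices with rank(Σ) ≤ q and rank(Σ′) ≤ q, and let J₁, …, J_r be subsets of {1, …, p} whose union is {1, …, p}. For 2 ≤ ℓ ≤ r put ς_ℓ = J_ℓ ∩ (J₁ ∪ ⋯ ∪ J_{ℓ−1}), and assume that for each such ℓ the principal submatrix (Σ_{jk})_{(j,k) ∈ ς_ℓ × ς_ℓ} has rank at least q. If Σ_{jk} = Σ′_{jk} for every pair (j,k) belonging to ⋃_{ℓ=1}^r J_ℓ × J_ℓ, then Σ = Σ′. -/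
open Matrix Finset

lemma my_sum_dotProduct {ι n : Type*} [Fintype ι] [Fintype n] (f : ι → n → ℝ) (w : n → ℝ) :
    (∑ i, f i) ⬝ᵥ w = ∑ i, f i ⬝ᵥ w := by
  simp only [dotProduct, Finset.sum_apply, Finset.sum_mul]
  exact Finset.sum_comm

lemma my_dotProduct_sum {ι n : Type*} [Fintype ι] [Fintype n] (w : n → ℝ) (f : ι → n → ℝ) :
    w ⬝ᵥ (∑ i, f i) = ∑ i, w ⬝ᵥ f i := by
  simp only [dotProduct, Finset.sum_apply, Finset.mul_sum]
  exact Finset.sum_comm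

/-- Two linear combinations (with the same coefficients) of families of vectors with
equal pairwise dot products have equal self-dot-products. -/
lemma dot_lincomb_eq {n ι : Type*} [Fintype ι] [Fintype n] (f g : ι → n → ℝ) (d : ι → ℝ)
    (h : ∀ o o' : ι, f o ⬝ᵥ f o' = g o ⬝ᵥ g o') :
    (∑ o, d o • f o) ⬝ᵥ (∑ o, d o • f o) = (∑ o, d o • g o) ⬝ᵥ (∑ o, d o • g o) := by
  rw [my_sum_dotProduct, my_sum_dotProduct]
  refine Finset.sum_congr rfl fun o _ => ?_
  rw [smul_dotProduct, smul_dotProduct, my_dotProduct_sum, my_dotProduct_sum]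
  congr 1
  refine Finset.sum_congr rfl fun o' _ => ?_
  rw [dotProduct_smul, dotProduct_smul, h]

open scoped MatrixOrder in
noncomputable def Matrix.PosSemidef.sqrt {n : Type*} [Fintype n] [DecidableEq n]
    {A : Matrix n n ℝ} (_hA : A.PosSemidef) : Matrix n n ℝ := CFC.sqrt A

open scoped MatrixOrder in
lemma Matrix.PosSemidef.posSemidef_sqrt {n : Type*} [Fintype n] [DecidableEq n]
    {A : Matrix n n ℝ} (hA : A.PosSemidef) : hA.sqrt.PosSemidef :=
  (CFC.sqrt_nonneg A).posSemidef

open scoped MatrixOrder in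
lemma Matrix.PosSemidef.sqrt_mul_self {n : Type*} [Fintype n] [DecidableEq n]
    {A : Matrix n n ℝ} (hA : A.PosSemidef) : hA.sqrt * hA.sqrt = A :=
  CFC.sqrt_mul_sqrt_self A hA.nonneg

/-- Gram representation of a real PSD matrix via its square root: rows of the square
root have dot products given by the matrix entries. -/
lemma sqrt_row_dot {n : ℕ} {S : Matrix (Fin n) (Fin n) ℝ} (hS : S.PosSemidef) (j k : Fin n) :
    hS.sqrt j ⬝ᵥ hS.sqrt k = S j k := by
  have hsym : hS.sqrtᵀ = hS.sqrt := by
    have h := hS.posSemidef_sqrt.1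
    simpa [Matrix.IsHermitian, Matrix.conjTranspose_eq_transpose_of_trivial] using h
  have hmul := hS.sqrt_mul_self
  calc hS.sqrt j ⬝ᵥ hS.sqrt k = (hS.sqrt * hS.sqrtᵀ) j k := by
        simp [Matrix.mul_apply, dotProduct, Matrix.transpose_apply]
    _ = S j k := by rw [hsym, hmul]

/-- Uniqueness of low-rank positive semidefinite completion from overlapping principal
blocks: if two p×p PSD matrices of rank ≤ q agree on all blocks `J ℓ × J ℓ` of a family
of subsets covering `{1, …, p}`, and for each ℓ ≥ 2 (0-indexed: `0 < ℓ`) the principal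
submatrix of S indexed by `ς ℓ = J ℓ ∩ (J 0 ∪ ⋯ ∪ J (ℓ−1))` has rank at least q, then
the two matrices are equal. -/
theorem low_rank_psd_completion_unique
    (p q r : ℕ) (hp : 0 < p) (hq : 0 < q) (hr : 0 < r)
    (S T : Matrix (Fin p) (Fin p) ℝ)
    (hS : S.PosSemidef) (hT : T.PosSemidef)
    (hrank : S.rank ≤ q) (hrank' : T.rank ≤ q)
    (J : Fin r → Finset (Fin p))
    (hcover : (univ : Finset (Fin r)).biUnion J = (univ : Finset (Fin p)))
    (ς : Fin r → Finset (Fin p))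
    (hς : ∀ ℓ : Fin r, ς ℓ = J ℓ ∩ (Finset.Iio ℓ).biUnion J)
    (hblockrank : ∀ ℓ : Fin r, 0 < (ℓ : ℕ) →
      q ≤ (S.submatrix (fun a : {x // x ∈ ς ℓ} => (a : Fin p))
            (fun a : {x // x ∈ ς ℓ} => (a : Fin p))).rank)
    (hagree : ∀ ℓ : Fin r, ∀ j k : Fin p, j ∈ J ℓ → k ∈ J ℓ → S j k = T j k) :
    S = T := by
  classical
  set B := hS.sqrt with hBdef
  set C := hT.sqrt with hCdef
  have hBsym : Bᵀ = B := by
    have h := hS.posSemidef_sqrt.1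
    simpa [Matrix.IsHermitian, Matrix.conjTranspose_eq_transpose_of_trivial] using h
  have haS : ∀ j k, B j ⬝ᵥ B k = S j k := sqrt_row_dot hS
  have hbT : ∀ j k, C j ⬝ᵥ C k = T j k := sqrt_row_dot hT
  have hSsym : ∀ j k, S j k = S k j := fun j k => by
    rw [← haS, ← haS, dotProduct_comm]
  have hTsym : ∀ j k, T j k = T k j := fun j k => by
    rw [← hbT, ← hbT, dotProduct_comm]
  -- rank of B equals rank of S
  have hBrank : B.rank = S.rank := by
    conv_rhs => rw [← hS.sqrt_mul_self]
    rw [show hS.sqrt * hS.sqrt = Bᵀ * B by rw [hBsym]]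
    exact (Matrix.rank_transpose_mul_self B).symm
  have hspan_full : Module.finrank ℝ (Submodule.span ℝ (Set.range B)) ≤ q := by
    rw [show Set.range B = Set.range B.row from rfl, ← Matrix.rank_eq_finrank_span_row]
    exact hBrank.le.trans hrank
  -- Main induction
  have main : ∀ n : ℕ, ∀ hn : n < r, ∀ j k : Fin p,
      j ∈ (Finset.Iic (⟨n, hn⟩ : Fin r)).biUnion J →
      k ∈ (Finset.Iic (⟨n, hn⟩ : Fin r)).biUnion J → S j k = T j k := by
    intro n
    induction n using Nat.strong_induction_on with
    | _ n IH =>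
      intro hn j k hj hk
      set ℓ : Fin r := ⟨n, hn⟩ with hℓdef
      -- agreement on the union of earlier blocks
      have hU : ∀ x y : Fin p, x ∈ (Finset.Iio ℓ).biUnion J →
          y ∈ (Finset.Iio ℓ).biUnion J → S x y = T x y := by
        intro x y hx hy
        obtain ⟨m, hm, hxm⟩ := Finset.mem_biUnion.mp hx
        obtain ⟨m', hm', hym⟩ := Finset.mem_biUnion.mp hy
        rw [Finset.mem_Iio] at hm hm'
        have hmax : (max m m' : Fin r) < ℓ := max_lt hm hm'
        have hlt : ((max m m' : Fin r) : ℕ) < n := hmax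
        refine IH _ hlt (max m m').2 x y ?_ ?_
        · exact Finset.mem_biUnion.mpr ⟨m, Finset.mem_Iic.mpr (le_max_left m m'), hxm⟩
        · exact Finset.mem_biUnion.mpr ⟨m', Finset.mem_Iic.mpr (le_max_right m m'), hym⟩
      -- split membership in Iic ℓ
      have hsplit : ∀ x : Fin p, x ∈ (Finset.Iic ℓ).biUnion J →
          x ∈ J ℓ ∨ x ∈ (Finset.Iio ℓ).biUnion J := by
        intro x hx
        obtain ⟨m, hm, hxm⟩ := Finset.mem_biUnion.mp hx
        rcases lt_or_eq_of_le (Finset.mem_Iic.mp hm) with h | h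
        · exact Or.inr (Finset.mem_biUnion.mpr ⟨m, Finset.mem_Iio.mpr h, hxm⟩)
        · exact Or.inl (h ▸ hxm)
      have hUpos : ∀ x : Fin p, x ∈ (Finset.Iio ℓ).biUnion J → 0 < n := by
        intro x hx
        obtain ⟨m, hm, _⟩ := Finset.mem_biUnion.mp hx
        rw [Finset.mem_Iio] at hm
        exact Nat.lt_of_le_of_lt (Nat.zero_le _) hm
      -- the key lemma: agreement between an old index and a new index
      have key : ∀ x : Fin p, x ∈ (Finset.Iio ℓ).biUnion J →
          ∀ y : Fin p, y ∈ J ℓ → S x y = T x y := by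
        intro x hx y hy
        have hn0 : 0 < n := hUpos x hx
        have hςsubJ : ς ℓ ⊆ J ℓ := by rw [hς ℓ]; exact Finset.inter_subset_left
        have hςsubU : ς ℓ ⊆ (Finset.Iio ℓ).biUnion J := by
          rw [hς ℓ]; exact Finset.inter_subset_right
        set incl : {z // z ∈ ς ℓ} → Fin p := fun z => (z : Fin p) with hincl
        set M : Matrix {z // z ∈ ς ℓ} (Fin p) ℝ := B.submatrix incl id with hM
        have hGram : S.submatrix incl incl = M * Mᵀ := by
          ext z w
          simp only [Matrix.submatrix_apply, hM, Matrix.mul_apply, Matrix.transpose_apply,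
            id_eq]
          rw [← haS (incl z) (incl w)]
          simp [dotProduct]
        have hrankM : q ≤ M.rank := by
          have h := hblockrank ℓ hn0
          rw [show (S.submatrix (fun a : {z // z ∈ ς ℓ} => (a : Fin p))
              (fun a : {z // z ∈ ς ℓ} => (a : Fin p))) = S.submatrix incl incl from rfl,
            hGram, Matrix.rank_self_mul_transpose] at h
          exact h
        have hspanς : q ≤ Module.finrank ℝ (Submodule.span ℝ (Set.range M)) := by
          rwa [show Set.range M = Set.range M.row from rfl, ← Matrix.rank_eq_finrank_span_row]
        have hMrows : Set.range M ⊆ Set.range B := by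
          rintro _ ⟨z, rfl⟩; exact ⟨incl z, rfl⟩
        have hspan_eq : Submodule.span ℝ (Set.range M) = Submodule.span ℝ (Set.range B) :=
          Submodule.eq_of_le_of_finrank_le (Submodule.span_mono hMrows)
            (hspan_full.trans hspanς)
        have hmem : B y ∈ Submodule.span ℝ (Set.range M) := by
          rw [hspan_eq]; exact Submodule.subset_span ⟨y, rfl⟩
        obtain ⟨c, hc⟩ := (Submodule.mem_span_range_iff_exists_fun ℝ).mp hmem
        have hcB : ∑ i, c i • B (incl i) = B y := by
          exact hc
        -- the same linear combination represents `C y`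
        have hcC : ∑ i, c i • C (incl i) = C y := by
          set ext : Option {z // z ∈ ς ℓ} → Fin p := fun o => Option.elim o y incl with hext
          have hJmem : ∀ o, ext o ∈ J ℓ := by
            rintro (_ | z)
            · exact hy
            · exact hςsubJ z.2
          have hdots : ∀ o o', C (ext o) ⬝ᵥ C (ext o') = B (ext o) ⬝ᵥ B (ext o') := by
            intro o o'
            rw [haS, hbT]
            exact (hagree ℓ _ _ (hJmem o) (hJmem o')).symm
          set d : Option {z // z ∈ ς ℓ} → ℝ := fun o => Option.elim o 1 (fun i => -(c i))
            with hd
          have husum : C y - ∑ i, c i • C (incl i) = ∑ o, d o • C (ext o) := by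
            rw [Fintype.sum_option]
            simp [hd, hext, sub_eq_add_neg, neg_smul, Finset.sum_neg_distrib]
          have hvsum : (0 : Fin p → ℝ) = ∑ o, d o • B (ext o) := by
            rw [Fintype.sum_option]
            simp only [hd, hext, Option.elim, one_smul, neg_smul, Finset.sum_neg_distrib]
            rw [hcB]
            abel
          have h0 : (C y - ∑ i, c i • C (incl i)) ⬝ᵥ (C y - ∑ i, c i • C (incl i)) = 0 := by
            rw [husum, dot_lincomb_eq (fun o => C (ext o)) (fun o => B (ext o)) d hdots,
              ← hvsum]
            simp
          have hu0 := dotProduct_self_eq_zero.mp h0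
          exact (sub_eq_zero.mp hu0).symm
        -- conclude
        calc S x y = B x ⬝ᵥ B y := (haS x y).symm
          _ = ∑ i, c i * (B x ⬝ᵥ B (incl i)) := by
              rw [← hcB, my_dotProduct_sum]
              refine Finset.sum_congr rfl fun i _ => ?_
              rw [dotProduct_smul]; rfl
          _ = ∑ i, c i * (C x ⬝ᵥ C (incl i)) := by
              refine Finset.sum_congr rfl fun i _ => ?_
              rw [haS, hbT]
              exact congrArg _ (hU x (incl i) hx (Finset.mem_biUnion.mp
                (hςsubU i.2) |> fun ⟨m, hm, hxm⟩ => Finset.mem_biUnion.mpr ⟨m, hm, hxm⟩))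
          _ = C x ⬝ᵥ C y := by
              rw [← hcC, my_dotProduct_sum]
              refine (Finset.sum_congr rfl fun i _ => ?_).symm
              rw [dotProduct_smul]; rfl
          _ = T x y := hbT x y
      rcases hsplit j hj with hjJ | hjU <;> rcases hsplit k hk with hkJ | hkU
      · exact hagree ℓ j k hjJ hkJ
      · rw [hSsym, hTsym]; exact key k hkU j hjJ
      · exact key j hjU k hkJ
      · exact hU j k hjU hkU
  -- conclude from the cover
  ext j k
  have hj : j ∈ (univ : Finset (Fin r)).biUnion J := by rw [hcover]; exact Finset.mem_univ j
  have hk : k ∈ (univ : Finset (Fin r)).biUnion J := by rw [hcover]; exact Finset.mem_univ k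
  obtain ⟨ℓ1, _, hj1⟩ := Finset.mem_biUnion.mp hj
  obtain ⟨ℓ2, _, hk2⟩ := Finset.mem_biUnion.mp hk
  refine main (max ℓ1 ℓ2 : Fin r) (max ℓ1 ℓ2).2 j k ?_ ?_
  · exact Finset.mem_biUnion.mpr ⟨ℓ1, Finset.mem_Iic.mpr (le_max_left ℓ1 ℓ2), hj1⟩
  · exact Finset.mem_biUnion.mpr ⟨ℓ2, Finset.mem_Iic.mpr (le_max_right ℓ1 ℓ2), hk2⟩
end
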